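/- arXiv:1310.1775 — 8 statements merged into one kernel-verified Lean document; each statement's English description precedes it below -/
import Mathlib

section
/- Let G be a finite non-cyclic group. Then σ(G) ≥ μ(G) + 1, where σ(G) is the covering number of G and μ(G) is the least integer k such that G has more than one maximal subgroup of index k. -/
set_option linter.unusedSectionVars false
set_option linter.unusedVariables false


open scoped Pointwise

/-- The normal covering number `γ(G)`: the smallest `k` such that there are `k` proper
subgroups of `G` whose conjugates cover `G`; it is `⊤` (infinity) if no such `k` exists
(e.g. when `G` is cyclic). -/
noncomputable def normalCoveringNumber (G : Type*) [Group G] : ℕ∞ :=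
  sInf {n : ℕ∞ | ∃ k : ℕ, n = (k : ℕ∞) ∧ ∃ H : Fin k → Subgroup G,
    (∀ i, H i ≠ ⊤) ∧ ∀ g : G, ∃ i, ∃ x : G, x * g * x⁻¹ ∈ H i}

/-- The covering number `σ(G)`: the smallest number of proper subgroups of `G` whose
union is `G`; it is `⊤` (infinity) if no such number exists (e.g. when `G` is cyclic). -/
noncomputable def coveringNumber (G : Type*) [Group G] : ℕ∞ :=
  sInf {n : ℕ∞ | ∃ k : ℕ, n = (k : ℕ∞) ∧ ∃ H : Fin k → Subgroup G,
    (∀ i, H i ≠ ⊤) ∧ ∀ g : G, ∃ i, g ∈ H i}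

/-- `μ(G)`: the least integer `k` such that `G` has more than one maximal subgroup
of index `k`. -/
noncomputable def muIndex (G : Type*) [Group G] : ℕ :=
  sInf {k : ℕ | ∃ H K : Subgroup G, IsCoatom H ∧ IsCoatom K ∧ H ≠ K ∧
    H.index = k ∧ K.index = k}

/-- `m(S)`: the smallest index of a proper subgroup of `S`. -/
noncomputable def minIndex (S : Type*) [Group S] : ℕ :=
  sInf {n : ℕ | ∃ H : Subgroup S, H ≠ ⊤ ∧ H.index = n}

section CohnAux

section Aux
variable {G : Type*} [Group G] [Finite G]

lemma normal_coatom_index_prime (N : Subgroup G) (hn : N.Normal) (hN : IsCoatom N) :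
    N.index.Prime := by
  have h1 : N.index ≠ 1 := fun h => hN.1 (Subgroup.index_eq_one.mp h)
  obtain ⟨p, hp, hdvd⟩ := Nat.exists_prime_and_dvd h1
  rw [Subgroup.index_eq_card] at hdvd
  haveI : Fact p.Prime := ⟨hp⟩
  obtain ⟨x, hx⟩ := exists_prime_orderOf_dvd_card' (G := G ⧸ N) p hdvd
  have hxne : x ≠ 1 := by
    intro h; rw [h, orderOf_one] at hx; exact hp.one_lt.ne' hx.symm
  obtain ⟨y, rfl⟩ := QuotientGroup.mk'_surjective N x
  set H := Subgroup.comap (QuotientGroup.mk' N) (Subgroup.zpowers (QuotientGroup.mk' N y))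
    with hHdef
  have hNH : N < H := by
    refine lt_of_le_of_ne (fun n hn' => ?_) (fun h => ?_)
    · have : QuotientGroup.mk' N n = 1 := (QuotientGroup.eq_one_iff n).mpr hn'
      simp only [hHdef, Subgroup.mem_comap, this]
      exact Subgroup.one_mem _
    · have hy : y ∈ H := by
        simp only [hHdef, Subgroup.mem_comap]
        exact Subgroup.mem_zpowers _
      rw [← h] at hy
      exact hxne ((QuotientGroup.eq_one_iff y).mpr hy)
  have htop : H = ⊤ := hN.2 H hNH
  have hzp : Subgroup.zpowers (QuotientGroup.mk' N y) = ⊤ := by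
    have := Subgroup.map_comap_eq_self_of_surjective
      (QuotientGroup.mk'_surjective N) (Subgroup.zpowers (QuotientGroup.mk' N y))
    rw [← hHdef, htop] at this
    rw [← this, Subgroup.map_top_of_surjective _ (QuotientGroup.mk'_surjective N)]
  have hcard : Nat.card (G ⧸ N) = p := by
    rw [← hx, ← Nat.card_zpowers (QuotientGroup.mk' N y), hzp, Subgroup.card_top]
  rw [Subgroup.index_eq_card, hcard]
  exact hp

lemma muIndex_le_of_pair {H K : Subgroup G} (hH : IsCoatom H) (hK : IsCoatom K)
    (hne : H ≠ K) (hidx : H.index = K.index) : muIndex G ≤ K.index :=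
  Nat.sInf_le ⟨H, K, hH, hK, hne, hidx, rfl⟩

lemma muIndex_le_of_not_normal {N : Subgroup G} (hN : IsCoatom N) (h : ¬ N.Normal) :
    muIndex G ≤ N.index := by
  have h' : ¬ ∀ n ∈ N, ∀ g : G, g * n * g⁻¹ ∈ N := fun hh => h ⟨hh⟩
  push_neg at h'
  obtain ⟨n, hnN, g, hng⟩ := h'
  set φ : G →* G := ((MulAut.conj g).symm).toMonoidHom with hφ
  set K := Subgroup.comap φ N with hK
  have hKco : IsCoatom K :=
    Subgroup.isCoatom_comap_of_surjective (MulAut.conj g).symm.surjective hN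
  have hmem : g * n * g⁻¹ ∈ K := by
    simp only [hK, Subgroup.mem_comap, hφ]
    have : (MulAut.conj g).symm (g * n * g⁻¹) = n := by
      simp [MulAut.conj_symm_apply]
      group
    rw [show φ (g * n * g⁻¹) = n from this]
    exact hnN
  have hKne : K ≠ N := fun h' => hng (h' ▸ hmem)
  have hKidx : K.index = N.index :=
    Subgroup.index_comap_of_surjective N (MulAut.conj g).symm.surjective
  exact muIndex_le_of_pair hKco hN hKne hKidx

lemma index_inf_dvd (N K : Subgroup G) (hn : N.Normal) :
    (N ⊓ K).index ∣ N.index * K.index := by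
  haveI := hn
  have h1 : (N ⊓ K).relIndex K * K.index = (N ⊓ K).index :=
    Subgroup.relIndex_mul_index inf_le_right
  rw [← h1, Subgroup.inf_relIndex_right]
  exact mul_dvd_mul (Subgroup.relIndex_dvd_index_of_normal N K) dvd_rfl

lemma index_finset_inf_dvd (s : Finset (Subgroup G)) (hnorm : ∀ N ∈ s, N.Normal) :
    (s.inf id).index ∣ ∏ N ∈ s, N.index := by
  classical
  induction s using Finset.induction_on with
  | empty => simp
  | @insert N s hNs ih =>
    rw [Finset.inf_insert, Finset.prod_insert hNs]
    exact (index_inf_dvd N (s.inf id) (hnorm N (Finset.mem_insert_self N s))).trans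
      (mul_dvd_mul dvd_rfl (ih fun K hK => hnorm K (Finset.mem_insert_of_mem hK)))

lemma exists_not_mem (s : Finset (Subgroup G)) (hnorm : ∀ N ∈ s, N.Normal)
    (hprime : ∀ N ∈ s, N.index.Prime)
    (hinj : ∀ N ∈ s, ∀ K ∈ s, N.index = K.index → N = K) :
    ∃ g : G, ∀ N ∈ s, g ∉ N := by
  classical
  induction s using Finset.induction_on with
  | empty => exact ⟨1, by simp⟩
  | @insert N s hNs ih =>
    obtain ⟨g, hg⟩ := ih (fun K hK => hnorm K (Finset.mem_insert_of_mem hK))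
      (fun K hK => hprime K (Finset.mem_insert_of_mem hK))
      (fun K hK L hL => hinj K (Finset.mem_insert_of_mem hK) L (Finset.mem_insert_of_mem hL))
    by_cases hgN : g ∈ N
    · have hle : ¬ (s.inf id ≤ N) := by
        intro hle
        have h1 : N.index ∣ (s.inf id).index := Subgroup.index_dvd_of_le hle
        have h2 := h1.trans (index_finset_inf_dvd s
          (fun K hK => hnorm K (Finset.mem_insert_of_mem hK)))
        have hNp := hprime N (Finset.mem_insert_self N s)
        obtain ⟨L, hLs, hdvd⟩ := (Nat.Prime.prime hNp).exists_mem_finset_dvd h2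
        have hLp := hprime L (Finset.mem_insert_of_mem hLs)
        have heq : N = L := hinj N (Finset.mem_insert_self N s) L
          (Finset.mem_insert_of_mem hLs) ((Nat.prime_dvd_prime_iff_eq hNp hLp).mp hdvd)
        exact hNs (heq ▸ hLs)
      obtain ⟨d, hd, hdN⟩ := SetLike.not_le_iff_exists.mp hle
      refine ⟨g * d, fun L hL => ?_⟩
      rcases Finset.mem_insert.mp hL with rfl | hLs
      · intro hmem
        exact hdN ((Subgroup.mul_mem_cancel_left L hgN).mp hmem)
      · intro hmem
        have hdL : d ∈ L := (Finset.inf_le hLs : s.inf id ≤ L) hd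
        exact hg L hLs ((Subgroup.mul_mem_cancel_right L hdL).mp hmem)
    · refine ⟨g, fun L hL => ?_⟩
      rcases Finset.mem_insert.mp hL with rfl | hLs
      · exact hgN
      · exact hg L hLs

lemma card_inf_mul_relIndex (A K : Subgroup G) :
    Nat.card ↥(A ⊓ K) * ((A ⊓ K).relIndex K) = Nat.card ↥K := by
  have h : (A ⊓ K) ≤ K := inf_le_right
  have h2 := Subgroup.card_mul_index ((A ⊓ K).subgroupOf K)
  rwa [Nat.card_congr (Subgroup.subgroupOfEquivOfLe h).toEquiv] at h2

end Aux

lemma key_lemma {G : Type*} [Group G] [Finite G] (𝓜 : Finset (Subgroup G))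
    (hmax : ∀ M ∈ 𝓜, IsCoatom M) (hcov : ∀ g : G, ∃ M ∈ 𝓜, g ∈ M) :
    muIndex G + 1 ≤ 𝓜.card := by
  classical
  letI : Fintype G := Fintype.ofFinite G
  set μ := muIndex G with hμ
  set F : Subgroup G → Finset G := fun M => Set.toFinset (M : Set G) with hF
  have memF : ∀ (M : Subgroup G) (x : G), x ∈ F M ↔ x ∈ M := by
    intro M x; simp [hF]
  have cardF : ∀ M : Subgroup G, (F M).card = Nat.card ↥M := by
    intro M
    rw [hF, Set.toFinset_card]
    exact (Nat.card_eq_fintype_card).symm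
  set cG := Fintype.card G with hcG
  have cardFmul : ∀ M : Subgroup G, (F M).card * M.index = cG := by
    intro M
    rw [cardF, hcG, ← Nat.card_eq_fintype_card]
    exact Subgroup.card_mul_index M
  have cGpos : 0 < cG := Fintype.card_pos
  set 𝓝 := 𝓜.filter (fun M => M.index < μ) with h𝓝
  by_cases hNe : 𝓝 = ∅
  -- Case A : all indices ≥ μ
  · obtain ⟨M₀, hM₀, _⟩ := hcov 1
    have hμle : ∀ M ∈ 𝓜, μ ≤ M.index := by
      intro M hM
      by_contra hlt
      have hmem : M ∈ 𝓝 := Finset.mem_filter.mpr ⟨hM, not_le.mp hlt⟩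
      rw [hNe] at hmem
      exact absurd hmem (Finset.notMem_empty M)
    set n₀ := M₀.index with hn₀
    have h2n : 2 ≤ n₀ := Subgroup.one_lt_index_of_ne_top (hmax M₀ hM₀).1
    have hsub : Finset.univ \ F M₀ ⊆ (𝓜.erase M₀).biUnion (fun M => F M \ F M₀) := by
      intro x hx
      rw [Finset.mem_sdiff] at hx
      obtain ⟨M, hM, hxM⟩ := hcov x
      have hxM₀ : x ∉ M₀ := fun h => hx.2 ((memF M₀ x).mpr h)
      have hMne : M ≠ M₀ := fun h => hxM₀ (h ▸ hxM)
      exact Finset.mem_biUnion.mpr ⟨M, Finset.mem_erase.mpr ⟨hMne, hM⟩,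
        Finset.mem_sdiff.mpr ⟨(memF M x).mpr hxM, fun h => hxM₀ ((memF M₀ x).mp h)⟩⟩
    have hterm : ∀ M ∈ 𝓜.erase M₀,
        n₀ * (F M \ F M₀).card ≤ (n₀ - 1) * (F M).card := by
      intro M _
      have hsd : (F M \ F M₀).card + (F M ∩ F M₀).card = (F M).card :=
        Finset.card_sdiff_add_card_inter (F M) (F M₀)
      have hFI : F M ∩ F M₀ = F (M₀ ⊓ M) := by
        ext x
        simp only [Finset.mem_inter, memF, Subgroup.mem_inf]
        tauto
      set r := (M₀ ⊓ M).relIndex M with hr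
      have hir : Nat.card ↥(M₀ ⊓ M) * r = Nat.card ↥M := card_inf_mul_relIndex M₀ M
      have hrle : r ≤ n₀ := by
        rw [hr, Subgroup.inf_relIndex_right]
        have h0 : M₀.relIndex ⊤ ≠ 0 := by
          rw [Subgroup.relIndex_top_right]; exact Subgroup.index_ne_zero_of_finite
        have h5 := Subgroup.relIndex_le_of_le_right (le_top : M ≤ ⊤) h0
        rwa [Subgroup.relIndex_top_right] at h5
      have h1 : (F M).card ≤ n₀ * (F M ∩ F M₀).card := by
        rw [hFI, cardF, cardF]
        calc Nat.card ↥M = Nat.card ↥(M₀ ⊓ M) * r := hir.symm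
          _ ≤ Nat.card ↥(M₀ ⊓ M) * n₀ := Nat.mul_le_mul_left _ hrle
          _ = n₀ * Nat.card ↥(M₀ ⊓ M) := mul_comm _ _
      have e : n₀ * (F M \ F M₀).card + (F M).card ≤ n₀ * (F M).card := by
        calc n₀ * (F M \ F M₀).card + (F M).card
            ≤ n₀ * (F M \ F M₀).card + n₀ * (F M ∩ F M₀).card := by
              exact Nat.add_le_add_left h1 _
          _ = n₀ * ((F M \ F M₀).card + (F M ∩ F M₀).card) := by ring
          _ = n₀ * (F M).card := by rw [hsd]
      rw [Nat.sub_one_mul]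
      exact Nat.le_sub_of_add_le e
    set S := ∑ M ∈ 𝓜.erase M₀, (F M).card with hS
    have hX : (Finset.univ \ F M₀).card ≤ ∑ M ∈ 𝓜.erase M₀, (F M \ F M₀).card :=
      (Finset.card_le_card hsub).trans (Finset.card_biUnion_le)
    have h3 : n₀ * (Finset.univ \ F M₀).card ≤ (n₀ - 1) * S := by
      calc n₀ * (Finset.univ \ F M₀).card
          ≤ n₀ * ∑ M ∈ 𝓜.erase M₀, (F M \ F M₀).card := Nat.mul_le_mul_left _ hX
        _ = ∑ M ∈ 𝓜.erase M₀, n₀ * (F M \ F M₀).card := Finset.mul_sum _ _ _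
        _ ≤ ∑ M ∈ 𝓜.erase M₀, (n₀ - 1) * (F M).card := Finset.sum_le_sum hterm
        _ = (n₀ - 1) * S := (Finset.mul_sum _ _ _).symm
    have hXc : (Finset.univ \ F M₀).card + (F M₀).card = cG := by
      rw [Finset.card_sdiff_add_card_eq_card (Finset.subset_univ _), Finset.card_univ]
    have e1 : n₀ * (Finset.univ \ F M₀).card + cG = n₀ * cG := by
      have hc : n₀ * (F M₀).card = cG := by rw [mul_comm]; exact cardFmul M₀
      calc n₀ * (Finset.univ \ F M₀).card + cG
          = n₀ * (Finset.univ \ F M₀).card + n₀ * (F M₀).card := by rw [hc]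
        _ = n₀ * ((Finset.univ \ F M₀).card + (F M₀).card) := by ring
        _ = n₀ * cG := by rw [hXc]
    have e2 : (n₀ - 1) * cG + cG = n₀ * cG := by
      have hh : n₀ - 1 + 1 = n₀ := by omega
      calc (n₀ - 1) * cG + cG = (n₀ - 1 + 1) * cG := by ring
        _ = n₀ * cG := by rw [hh]
    have e3 : (n₀ - 1) * cG = n₀ * (Finset.univ \ F M₀).card :=
      Nat.add_right_cancel (e2.trans e1.symm)
    have h6 : cG ≤ S := Nat.le_of_mul_le_mul_left (e3 ▸ h3) (by omega)
    have h7 : μ * S ≤ (𝓜.erase M₀).card * cG := by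
      calc μ * S = ∑ M ∈ 𝓜.erase M₀, μ * (F M).card := Finset.mul_sum _ _ _
        _ ≤ ∑ _M ∈ 𝓜.erase M₀, cG := by
            refine Finset.sum_le_sum (fun M hM => ?_)
            have hle := hμle M (Finset.mem_of_mem_erase hM)
            calc μ * (F M).card ≤ M.index * (F M).card := Nat.mul_le_mul_right _ hle
              _ = cG := by rw [mul_comm]; exact cardFmul M
        _ = (𝓜.erase M₀).card * cG := by rw [Finset.sum_const, smul_eq_mul]
    have h8 : μ * cG ≤ (𝓜.erase M₀).card * cG := (Nat.mul_le_mul_left μ h6).trans h7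
    have h9 : μ ≤ (𝓜.erase M₀).card := Nat.le_of_mul_le_mul_right h8 cGpos
    have h10 : (𝓜.erase M₀).card = 𝓜.card - 1 := Finset.card_erase_of_mem hM₀
    have h11 : 1 ≤ 𝓜.card := Finset.card_pos.mpr ⟨M₀, hM₀⟩
    omega
  -- Case B : some maximal subgroup in the cover has index < μ
  · have h𝓝𝓜 : 𝓝 ⊆ 𝓜 := Finset.filter_subset _ _
    have hb : ∀ N ∈ 𝓝, N.index < μ := fun N hN => (Finset.mem_filter.mp hN).2
    have hco : ∀ N ∈ 𝓝, IsCoatom N := fun N hN => hmax N (h𝓝𝓜 hN)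
    have hnorm : ∀ N ∈ 𝓝, N.Normal := by
      intro N hN
      by_contra h
      exact absurd (muIndex_le_of_not_normal (hco N hN) h) (not_le.mpr (hb N hN))
    have hprime : ∀ N ∈ 𝓝, N.index.Prime :=
      fun N hN => normal_coatom_index_prime N (hnorm N hN) (hco N hN)
    have hinj : ∀ N ∈ 𝓝, ∀ K ∈ 𝓝, N.index = K.index → N = K := by
      intro N hN K hK hidx
      by_contra hne
      exact absurd (muIndex_le_of_pair (hco N hN) (hco K hK) hne hidx)
        (not_le.mpr (hb K hK))
    set D := 𝓝.inf id with hD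
    set m := ∏ N ∈ 𝓝, N.index with hm
    have hm0 : m ≠ 0 := by
      rw [hm]
      exact Finset.prod_ne_zero_iff.mpr (fun N hN => (hprime N hN).pos.ne')
    obtain ⟨g, hg⟩ := exists_not_mem 𝓝 hnorm hprime hinj
    have hDdvd : D.index ∣ m := index_finset_inf_dvd 𝓝 hnorm
    set C := (F D).image (fun x => g * x) with hC
    have hCcard : C.card = (F D).card :=
      Finset.card_image_of_injective _ (mul_right_injective g)
    have hCavoid : ∀ N ∈ 𝓝, ∀ x ∈ C, x ∉ N := by
      intro N hN x hx hxN
      obtain ⟨d, hd, rfl⟩ := Finset.mem_image.mp hx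
      have hdD : d ∈ D := (memF D d).mp hd
      have hdN : d ∈ N := (Finset.inf_le hN : D ≤ N) hdD
      exact hg N hN ((Subgroup.mul_mem_cancel_right N hdN).mp hxN)
    have hCsub : C ⊆ (𝓜 \ 𝓝).biUnion (fun M => F M ∩ C) := by
      intro x hx
      obtain ⟨M, hM, hxM⟩ := hcov x
      have hM𝓝 : M ∉ 𝓝 := fun h => hCavoid M h x hx hxM
      exact Finset.mem_biUnion.mpr ⟨M, Finset.mem_sdiff.mpr ⟨hM, hM𝓝⟩,
        Finset.mem_inter.mpr ⟨(memF M x).mpr hxM, hx⟩⟩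
    have hterm : ∀ M ∈ 𝓜 \ 𝓝, m * (F M ∩ C).card ≤ (F M).card := by
      intro M hM'
      obtain ⟨hMm, hM𝓝⟩ := Finset.mem_sdiff.mp hM'
      rcases (F M ∩ C).eq_empty_or_nonempty with he | ⟨x, hx⟩
      · rw [he]; simp
      · have hxM : x ∈ M := (memF M x).mp (Finset.mem_inter.mp hx).1
        obtain ⟨d₀, hd₀, hxd₀⟩ := Finset.mem_image.mp (Finset.mem_inter.mp hx).2
        have hd₀D : d₀ ∈ D := (memF D d₀).mp hd₀
        have step1 : (F M ∩ C).card ≤ (F (D ⊓ M)).card := by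
          apply Finset.card_le_card_of_injOn (fun y => x⁻¹ * y)
          · intro y hy
            obtain ⟨hyM, hyC⟩ := Finset.mem_inter.mp hy
            obtain ⟨d', hd', hyd'⟩ := Finset.mem_image.mp hyC
            simp only [Finset.mem_coe, memF, Subgroup.mem_inf]
            constructor
            · have hxy : x⁻¹ * y = d₀⁻¹ * d' := by rw [← hxd₀, ← hyd']; group
              rw [hxy]
              exact Subgroup.mul_mem D (Subgroup.inv_mem D hd₀D) ((memF D d').mp hd')
            · exact Subgroup.mul_mem M (Subgroup.inv_mem M hxM) ((memF M y).mp hyM)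
          · exact (mul_right_injective x⁻¹).injOn
        set r := (D ⊓ M).relIndex M with hr
        have hDM : Nat.card ↥(D ⊓ M) * r = Nat.card ↥M := card_inf_mul_relIndex D M
        have hmr : m ∣ r := by
          have hprod : m = ∏ p ∈ 𝓝.image Subgroup.index, p := by
            rw [hm, Finset.prod_image hinj]
          rw [hprod]
          apply Finset.prod_primes_dvd
          · intro p hp
            obtain ⟨N, hN, rfl⟩ := Finset.mem_image.mp hp
            exact (hprime N hN).prime
          · intro p hp
            obtain ⟨N, hN, rfl⟩ := Finset.mem_image.mp hp
            haveI := hnorm N hN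
            have hDN : D ⊓ M ≤ N ⊓ M := inf_le_inf_right M (Finset.inf_le hN : D ≤ N)
            have hchain := Subgroup.relIndex_mul_relIndex (D ⊓ M) (N ⊓ M) M hDN inf_le_right
            have hNM : (N ⊓ M).relIndex M = N.index := by
              rw [Subgroup.inf_relIndex_right]
              have hdvd := Subgroup.relIndex_dvd_index_of_normal N M
              rcases (hprime N hN).eq_one_or_self_of_dvd _ hdvd with h1 | h2
              · exfalso
                have hle : M ≤ N := Subgroup.relIndex_eq_one.mp h1
                have hne : M ≠ N := fun h => hM𝓝 (h ▸ hN)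
                have htop : N = ⊤ := (hmax M hMm).2 N (lt_of_le_of_ne hle hne)
                exact (hco N hN).1 htop
              · exact h2
            exact ⟨(D ⊓ M).relIndex (N ⊓ M), by rw [hr, ← hchain, hNM, mul_comm]⟩
        have hr0 : r ≠ 0 := by
          intro h0
          rw [h0, mul_zero] at hDM
          exact (Nat.card_pos).ne' hDM.symm
        have hmle : m ≤ r := Nat.le_of_dvd (Nat.pos_of_ne_zero hr0) hmr
        calc m * (F M ∩ C).card ≤ m * (F (D ⊓ M)).card := Nat.mul_le_mul_left _ step1
          _ = m * Nat.card ↥(D ⊓ M) := by rw [cardF]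
          _ ≤ r * Nat.card ↥(D ⊓ M) := Nat.mul_le_mul_right _ hmle
          _ = Nat.card ↥M := by rw [mul_comm]; exact hDM
          _ = (F M).card := (cardF M).symm
    have hsum : C.card ≤ ∑ M ∈ 𝓜 \ 𝓝, (F M ∩ C).card :=
      (Finset.card_le_card hCsub).trans Finset.card_biUnion_le
    have hCG : cG ≤ m * C.card := by
      have h1 : cG = Nat.card ↥D * D.index := by
        rw [hcG, ← Nat.card_eq_fintype_card]; exact (Subgroup.card_mul_index D).symm
      have h2 : D.index ≤ m := Nat.le_of_dvd (Nat.pos_of_ne_zero hm0) hDdvd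
      calc cG = Nat.card ↥D * D.index := h1
        _ ≤ Nat.card ↥D * m := Nat.mul_le_mul_left _ h2
        _ = m * Nat.card ↥D := mul_comm _ _
        _ = m * C.card := by rw [hCcard, cardF]
    set S := ∑ M ∈ 𝓜 \ 𝓝, (F M).card with hS
    have h6 : cG ≤ S := by
      calc cG ≤ m * C.card := hCG
        _ ≤ m * ∑ M ∈ 𝓜 \ 𝓝, (F M ∩ C).card := Nat.mul_le_mul_left _ hsum
        _ = ∑ M ∈ 𝓜 \ 𝓝, m * (F M ∩ C).card := Finset.mul_sum _ _ _
        _ ≤ S := Finset.sum_le_sum hterm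
    have hμle : ∀ M ∈ 𝓜 \ 𝓝, μ ≤ M.index := by
      intro M hM'
      obtain ⟨hMm, hM𝓝⟩ := Finset.mem_sdiff.mp hM'
      by_contra hlt
      exact hM𝓝 (Finset.mem_filter.mpr ⟨hMm, not_le.mp hlt⟩)
    have h7 : μ * S ≤ (𝓜 \ 𝓝).card * cG := by
      calc μ * S = ∑ M ∈ 𝓜 \ 𝓝, μ * (F M).card := Finset.mul_sum _ _ _
        _ ≤ ∑ _M ∈ 𝓜 \ 𝓝, cG := by
            refine Finset.sum_le_sum (fun M hM => ?_)
            calc μ * (F M).card ≤ M.index * (F M).card :=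
                Nat.mul_le_mul_right _ (hμle M hM)
              _ = cG := by rw [mul_comm]; exact cardFmul M
        _ = (𝓜 \ 𝓝).card * cG := by rw [Finset.sum_const, smul_eq_mul]
    have h8 : μ * cG ≤ (𝓜 \ 𝓝).card * cG := (Nat.mul_le_mul_left μ h6).trans h7
    have h9 : μ ≤ (𝓜 \ 𝓝).card := Nat.le_of_mul_le_mul_right h8 cGpos
    have h10 : (𝓜 \ 𝓝).card = 𝓜.card - 𝓝.card := Finset.card_sdiff_of_subset h𝓝𝓜
    have h11 : 1 ≤ 𝓝.card := Finset.card_pos.mpr (Finset.nonempty_of_ne_empty hNe)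
    have h12 : 𝓝.card ≤ 𝓜.card := Finset.card_le_card h𝓝𝓜
    omega


end CohnAux

/-- Cohn: for a finite non-cyclic group, `σ(G) ≥ μ(G) + 1`. -/
theorem sigma_ge_mu_add_one (G : Type*) [Group G] [Finite G] (hG : ¬ IsCyclic G) :
    (muIndex G : ℕ∞) + 1 ≤ coveringNumber G := by
  rw [coveringNumber]
  apply le_sInf
  rintro n ⟨k, rfl, H, hprop, hcov⟩
  have hmain : muIndex G + 1 ≤ k := by
    classical
    haveI : Finite (Subgroup G) :=
      Finite.of_injective (fun M : Subgroup G => (M : Set G)) SetLike.coe_injective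
    haveI : IsCoatomic (Subgroup G) :=
      isCoatomic_of_orderTop_gt_wellFounded (wellFounded_gt)
    have hcoat : ∀ i : Fin k, ∃ M : Subgroup G, IsCoatom M ∧ H i ≤ M := by
      intro i
      rcases (eq_top_or_exists_le_coatom (H i)) with h | ⟨M, hM, hle⟩
      · exact absurd h (hprop i)
      · exact ⟨M, hM, hle⟩
    choose M hM1 hM2 using hcoat
    set 𝓜 := Finset.image M Finset.univ with h𝓜
    have hmax : ∀ S ∈ 𝓜, IsCoatom S := by
      intro S hS
      obtain ⟨i, _, rfl⟩ := Finset.mem_image.mp hS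
      exact hM1 i
    have hcov' : ∀ g : G, ∃ S ∈ 𝓜, g ∈ S := by
      intro g
      obtain ⟨i, hgi⟩ := hcov g
      exact ⟨M i, Finset.mem_image_of_mem M (Finset.mem_univ i), hM2 i hgi⟩
    calc muIndex G + 1 ≤ 𝓜.card := key_lemma 𝓜 hmax hcov'
      _ ≤ Finset.univ.card := Finset.card_image_le
      _ = k := by rw [Finset.card_univ, Fintype.card_fin]
  exact_mod_cast hmain
end

section
/- Let G be a finite soluble non-cyclic group such that G/G′ is cyclic, where G′ is the commutator subgroup of G. Then γ(G) = 2. -/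
open scoped Pointwise

open MulAction in
lemma no_single_cover {G : Type*} [Group G] [Finite G] (H : Subgroup G) (hH : H ≠ ⊤) :
    ∃ g : G, ∀ x : G, x * g * x⁻¹ ∉ H := by
  by_contra hcon
  push_neg at hcon
  classical
  letI := Fintype.ofFinite G
  letI := Fintype.ofFinite (G ⧸ H)
  letI : Fintype (Quotient (orbitRel G (G ⧸ H))) := Fintype.ofFinite _
  have hsub : Subsingleton (Quotient (orbitRel G (G ⧸ H))) := by
    constructor
    rintro ⟨a⟩ ⟨b⟩
    refine Quotient.sound ?_
    obtain ⟨g, hg⟩ := MulAction.exists_smul_eq G b a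
    exact ⟨g, hg⟩
  have hΩ : Fintype.card (Quotient (orbitRel G (G ⧸ H))) = 1 := by
    have : Nonempty (Quotient (orbitRel G (G ⧸ H))) := inferInstance
    have h1 := Fintype.card_pos_iff.mpr this
    have h2 := Fintype.card_le_one_iff_subsingleton.mpr hsub
    omega
  have hburn := MulAction.sum_card_fixedBy_eq_card_orbits_mul_card_group G (G ⧸ H)
  rw [hΩ, one_mul] at hburn
  -- each fixedBy is nonempty
  have hpos : ∀ g : G, 1 ≤ Fintype.card (fixedBy (G ⧸ H) g) := by
    intro g
    obtain ⟨x, hx⟩ := hcon g⁻¹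
    refine Fintype.card_pos_iff.mpr ⟨⟨(x⁻¹ : G), ?_⟩⟩
    show g • ((x⁻¹ : G) : G ⧸ H) = ((x⁻¹ : G) : G ⧸ H)
    rw [MulAction.Quotient.smul_coe]
    rw [QuotientGroup.eq]
    simpa [mul_assoc] using hx
  -- fixedBy 1 has card = index ≥ 2
  have hbig : Fintype.card (fixedBy (G ⧸ H) (1 : G)) = Fintype.card (G ⧸ H) := by
    refine Fintype.card_congr (Equiv.subtypeUnivEquiv ?_)
    intro q; exact one_smul G q
  have hidx : 2 ≤ Fintype.card (G ⧸ H) := by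
    have h0 : Fintype.card (G ⧸ H) ≠ 0 := Fintype.card_ne_zero
    have h1 : Fintype.card (G ⧸ H) ≠ 1 := by
      intro h
      apply hH
      have : H.index = 1 := by
        rw [Subgroup.index, Nat.card_eq_fintype_card, h]
      exact Subgroup.index_eq_one.mp this
    omega
  -- combine
  have := Finset.add_sum_erase Finset.univ (fun g : G => Fintype.card (fixedBy (G ⧸ H) g)) (Finset.mem_univ (1 : G))
  have hrest : (Finset.univ.erase (1 : G)).card ≤ ∑ g ∈ Finset.univ.erase (1 : G), Fintype.card (fixedBy (G ⧸ H) g) := by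
    simpa using Finset.card_nsmul_le_sum (Finset.univ.erase (1 : G))
      (fun g : G => Fintype.card (fixedBy (G ⧸ H) g)) 1 (fun i _ => hpos i)
  have hcard1 : (Finset.univ.erase (1 : G)).card = Fintype.card G - 1 := by
    simp [Finset.card_erase_of_mem, Finset.card_univ]
  have hGpos : 0 < Fintype.card G := Fintype.card_pos
  rw [hburn, hbig] at this
  rw [hcard1] at hrest
  omega


universe u

open scoped commutatorElement in
lemma exists_cover_two : ∀ (n : ℕ) (G : Type u) [Group G] [Finite G] [Group.IsSolvable G],
    Nat.card G ≤ n → ¬ IsCyclic G → IsCyclic (Abelianization G) →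
    ∃ H K : Subgroup G, H ≠ ⊤ ∧ K ≠ ⊤ ∧
      ∀ g : G, (∃ x : G, x * g * x⁻¹ ∈ H) ∨ (∃ x : G, x * g * x⁻¹ ∈ K) := by
  intro n
  induction n with
  | zero =>
    intro G _ _ _ hcard _ _
    have : 0 < Nat.card G := Nat.card_pos
    omega
  | succ n ih =>
    intro G _ _ _ hcard hnc hab
    have hnt : Nontrivial G := by
      by_contra h
      rw [not_nontrivial_iff_subsingleton] at h
      exact hnc (isCyclic_of_subsingleton)
    classical
    -- minimal nontrivial normal subgroup
    obtain ⟨V, ⟨hVnormal, hVbot⟩, hVmin⟩ :=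
      (Finite.to_wellFoundedLT (α := Subgroup G)).wf.has_min
        {N : Subgroup G | N.Normal ∧ N ≠ ⊥} ⟨⊤, ⟨inferInstance, by simp⟩⟩
    haveI := hVnormal
    have hVmin' : ∀ N : Subgroup G, N.Normal → N < V → N = ⊥ := by
      intro N hN hlt
      by_contra hne
      exact hVmin N ⟨hN, hne⟩ hlt
    by_cases hc : IsCyclic (G ⧸ V)
    · -- case b : G ⧸ V is cyclic
      obtain ⟨ξ, hξ⟩ := hc.exists_generator
      obtain ⟨x, hxξ⟩ := QuotientGroup.mk'_surjective V ξ
      -- decomposition of elements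
      have hdec : ∀ g : G, ∃ k : ℕ, g * (x ^ k)⁻¹ ∈ V := by
        intro g
        have h1 : (QuotientGroup.mk' V g) ∈ Subgroup.zpowers ξ := hξ _
        obtain ⟨k, hk⟩ := ((isOfFinOrder_of_finite ξ).mem_powers_iff_mem_zpowers).mpr h1
        refine ⟨k, ?_⟩
        have h2 : QuotientGroup.mk' V (g * (x ^ k)⁻¹) = 1 := by
          rw [map_mul, map_inv, map_pow, hxξ, ← hk]
          simp
        simpa using (QuotientGroup.eq_one_iff _).mp h2
      -- V is abelian
      have hVcomm : ∀ a b : G, a ∈ V → b ∈ V → a * b = b * a := by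
        have hW : ⁅V, V⁆ = ⊥ := by
          have hle : ⁅V, V⁆ ≤ V := Subgroup.commutator_le_left V V
          rcases lt_or_eq_of_le hle with hlt | heq
          · exact hVmin' _ inferInstance hlt
          · exfalso
            -- V would be perfect, contradicting solvability
            have hmap : Subgroup.map V.subtype ⁅(⊤ : Subgroup V), (⊤ : Subgroup V)⁆ =
                Subgroup.map V.subtype ⊤ := by
              rw [Subgroup.map_commutator, ← MonoidHom.range_eq_map, Subgroup.range_subtype, heq]
            have htop : ⁅(⊤ : Subgroup V), (⊤ : Subgroup V)⁆ = (⊤ : Subgroup V) :=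
              Subgroup.map_injective V.subtype_injective hmap
            have hds : ∀ n, derivedSeries V n = ⊤ := by
              intro n
              induction n with
              | zero => rfl
              | succ n ihn => rw [derivedSeries_succ, ihn, htop]
            haveI : Nontrivial V := (Subgroup.nontrivial_iff_ne_bot V).mpr hVbot
            obtain ⟨g, hg1⟩ := exists_ne (1 : V)
            exact not_solvable_of_mem_derivedSeries hg1
              (fun n => by rw [hds n]; trivial) inferInstance
        intro a b ha hb
        have : ⁅a, b⁆ ∈ (⊥ : Subgroup G) := hW ▸ Subgroup.commutator_mem_commutator ha hb
        rw [Subgroup.mem_bot, commutatorElement_def] at this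
        have := congrArg (fun t => t * b * a) this
        simpa [mul_assoc] using this
      -- the "order" m of the action of x on V
      set T : Set ℕ := {k | 0 < k ∧ ∀ v ∈ V, x ^ k * v = v * x ^ k} with hTdef
      have hTne : orderOf x ∈ T := by
        refine ⟨orderOf_pos x, fun v hv => ?_⟩
        rw [pow_orderOf_eq_one]
        simp
      set m := sInf T with hmdef
      obtain ⟨hmpos, hmcomm⟩ : m ∈ T := Nat.sInf_mem ⟨_, hTne⟩
      have hdvd_of_comm : ∀ k : ℕ, (∀ v ∈ V, x ^ k * v = v * x ^ k) → m ∣ k := by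
        intro k hcomm
        rcases Nat.eq_zero_or_pos (k % m) with h0 | hpos'
        · exact Nat.dvd_of_mod_eq_zero h0
        · exfalso
          have hrm : k % m < m := Nat.mod_lt _ hmpos
          have hrT : (k % m) ∈ T := by
            refine ⟨hpos', fun v hv => ?_⟩
            have c1 : Commute (x ^ (m * (k / m))) v := by
              rw [pow_mul]
              exact Commute.pow_left (hmcomm v hv) (k / m)
            have c2 : Commute (x ^ k) v := hcomm v hv
            have hxk : x ^ k = x ^ (m * (k / m)) * x ^ (k % m) := by
              rw [← pow_add, Nat.div_add_mod]
            have hxe : x ^ (k % m) = (x ^ (m * (k / m)))⁻¹ * x ^ k := by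
              rw [hxk]
              group
            rw [hxe]
            exact Commute.mul_left c1.inv_left c2
          exact absurd (Nat.sInf_le hrT) (by omega)
      have hdvd_comm : ∀ k : ℕ, m ∣ k → ∀ v ∈ V, x ^ k * v = v * x ^ k := by
        rintro k ⟨c, rfl⟩ v hv
        rw [pow_mul]
        exact Commute.pow_left (hmcomm v hv) c
      -- m ≠ 1, else G would be abelian hence cyclic
      have hm1 : m ≠ 1 := by
        intro h1
        apply hnc
        have hxcomm : ∀ v ∈ V, x * v = v * x := by
          intro v hv
          have := hmcomm v hv
          rwa [h1, pow_one] at this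
        have hcen : ∀ a b : G, a * b = b * a := by
          intro a b
          obtain ⟨ka, hka⟩ := hdec a
          obtain ⟨kb, hkb⟩ := hdec b
          have ha : a = (a * (x ^ ka)⁻¹) * x ^ ka := by group
          have hb : b = (b * (x ^ kb)⁻¹) * x ^ kb := by group
          have hxc : ∀ v ∈ V, ∀ k : ℕ, Commute (x ^ k) v :=
            fun v hv k => Commute.pow_left (hxcomm v hv) k
          have hcomm : Commute ((a * (x ^ ka)⁻¹) * x ^ ka) ((b * (x ^ kb)⁻¹) * x ^ kb) := by
            refine Commute.mul_left (Commute.mul_right ?_ ?_) (Commute.mul_right ?_ ?_)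
            · exact hVcomm _ _ hka hkb
            · exact (hxc _ hka kb).symm
            · exact hxc _ hkb ka
            · exact (Commute.refl x).pow_pow ka kb
          rw [← ha, ← hb] at hcomm
          exact hcomm
        letI : CommGroup G := { (inferInstance : Group G) with mul_comm := hcen }
        have hsurj : Function.Surjective (Abelianization.lift (MonoidHom.id G)) :=
          fun g => ⟨Abelianization.of g, rfl⟩
        exact isCyclic_of_surjective _ hsurj
      have hxtop : Subgroup.zpowers x ≠ ⊤ := by
        intro h
        refine hnc ⟨⟨x, fun y => ?_⟩⟩
        have hy : y ∈ (⊤ : Subgroup G) := trivial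
        rwa [← h] at hy
      -- the second subgroup K
      set K := V ⊔ Subgroup.zpowers (x ^ m) with hKdef
      have hKtop : K ≠ ⊤ := by
        intro htop
        have hxK : x ∈ K := htop ▸ Subgroup.mem_top x
        rw [hKdef] at hxK
        have hxK' : (x : G) ∈ (V : Set G) * (Subgroup.zpowers (x ^ m) : Set G) := by
          rw [← Subgroup.normal_mul]
          exact hxK
        obtain ⟨v, hv, z, hz, hvz⟩ := hxK'
        obtain ⟨i, hi⟩ := ((isOfFinOrder_of_finite (x ^ m)).mem_powers_iff_mem_zpowers).mpr hz
        set d := orderOf x with hddef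
        have hd : 0 < d := orderOf_pos x
        have hzx : z = x ^ (m * i) := by rw [← hi]; exact (pow_mul x m i).symm
        have hzinv : x ^ ((d - 1) * (m * i)) = z⁻¹ := by
          refine eq_inv_of_mul_eq_one_left ?_
          rw [hzx, ← pow_add]
          have : (d - 1) * (m * i) + m * i = d * (m * i) := by
            obtain ⟨e, he⟩ : ∃ e, d = e + 1 := ⟨d - 1, by omega⟩
            rw [he]
            simp [Nat.add_mul]
          rw [this, pow_mul, pow_orderOf_eq_one, one_pow]
        have hveq : v = x ^ (1 + (d - 1) * (m * i)) := by
          have : v = x * z⁻¹ := by rw [← hvz]; group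
          rw [this, ← hzinv, pow_add, pow_one]
        have hmd : m ∣ 1 + (d - 1) * (m * i) := by
          apply hdvd_of_comm
          intro w hw
          rw [← hveq]
          exact hVcomm v w hv hw
        have : m ∣ (d - 1) * (m * i) := Dvd.dvd.mul_left (dvd_mul_right m i) (d - 1)
        have hm1' : m ∣ 1 := by
          have := Nat.dvd_sub hmd this
          simpa using this
        exact hm1 (Nat.dvd_one.mp hm1')
      -- the covering
      refine ⟨Subgroup.zpowers x, K, hxtop, hKtop, ?_⟩
      intro g
      obtain ⟨k, hvV⟩ := hdec g
      have hg : g = (g * (x ^ k)⁻¹) * x ^ k := by group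
      by_cases hdvd : m ∣ k
      · right
        refine ⟨1, ?_⟩
        have hgK : g ∈ K := by
          rw [hg]
          refine K.mul_mem (Subgroup.mem_sup_left hvV) (Subgroup.mem_sup_right ?_)
          obtain ⟨c, rfl⟩ := hdvd
          exact ⟨(c : ℤ), by dsimp only; rw [zpow_natCast, ← pow_mul]⟩
        simpa using hgK
      · left
        -- the conjugation map on V is bijective
        set C := V ⊓ Subgroup.centralizer {x ^ k} with hCdef
        have hCbot : C = ⊥ := by
          by_cases hCeq : C = V
          · exfalso
            apply hdvd
            apply hdvd_of_comm
            intro v hv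
            have hvC : v ∈ C := hCeq ▸ hv
            exact Subgroup.mem_centralizer_iff.mp hvC.2 _ rfl
          · -- C is normal in G
            have hCnormal : C.Normal := by
              constructor
              intro c hcC gg
              obtain ⟨j, hjV⟩ := hdec gg
              have hgg : gg = (gg * (x ^ j)⁻¹) * x ^ j := by group
              set u := gg * (x ^ j)⁻¹ with hudef
              have hcV : c ∈ V := hcC.1
              have hcc : x ^ k * c = c * x ^ k :=
                Subgroup.mem_centralizer_iff.mp hcC.2 _ rfl
              have hd1 : x ^ j * c * (x ^ j)⁻¹ ∈ V := hVnormal.conj_mem c hcV (x ^ j)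
              have e1 : gg * c * gg⁻¹ = u * (x ^ j * c * (x ^ j)⁻¹) * u⁻¹ := by
                rw [hgg]
                group
              have e2 : u * (x ^ j * c * (x ^ j)⁻¹) * u⁻¹ = x ^ j * c * (x ^ j)⁻¹ := by
                have h5 := hVcomm u _ hjV hd1
                rw [h5]
                group
              rw [e1, e2]
              refine ⟨hd1, Subgroup.mem_centralizer_iff.mpr ?_⟩
              rintro h rfl
              calc x ^ k * (x ^ j * c * (x ^ j)⁻¹)
                  = x ^ j * (x ^ k * c) * (x ^ j)⁻¹ := by group
                _ = x ^ j * (c * x ^ k) * (x ^ j)⁻¹ := by rw [hcc]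
                _ = x ^ j * c * (x ^ j)⁻¹ * x ^ k := by group
            have hlt : C < V := lt_of_le_of_ne inf_le_left hCeq
            exact hVmin' C hCnormal hlt
        -- the map w ↦ w * (x^k w⁻¹ x⁻ᵏ) on V
        set f : V → V := fun w =>
          ⟨(w : G) * (x ^ k * (w : G)⁻¹ * (x ^ k)⁻¹),
            V.mul_mem w.2 (hVnormal.conj_mem _ (V.inv_mem w.2) _)⟩ with hfdef
        have hfinj : Function.Injective f := by
          intro w1 w2 hf
          have h : (w1 : G) * (x ^ k * (w1 : G)⁻¹ * (x ^ k)⁻¹) =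
              (w2 : G) * (x ^ k * (w2 : G)⁻¹ * (x ^ k)⁻¹) := congrArg Subtype.val hf
          have hu : x ^ k * ((w2 : G)⁻¹ * (w1 : G)) * (x ^ k)⁻¹ = (w2 : G)⁻¹ * (w1 : G) := by
            calc x ^ k * ((w2 : G)⁻¹ * (w1 : G)) * (x ^ k)⁻¹
                = (w2 : G)⁻¹ * ((w2 : G) * (x ^ k * (w2 : G)⁻¹ * (x ^ k)⁻¹)) *
                  (x ^ k * (w1 : G) * (x ^ k)⁻¹) := by group
              _ = (w2 : G)⁻¹ * ((w1 : G) * (x ^ k * (w1 : G)⁻¹ * (x ^ k)⁻¹)) *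
                  (x ^ k * (w1 : G) * (x ^ k)⁻¹) := by rw [← h]
              _ = (w2 : G)⁻¹ * (w1 : G) := by group
          have huC : (w2 : G)⁻¹ * (w1 : G) ∈ C := by
            refine ⟨V.mul_mem (V.inv_mem w2.2) w1.2, Subgroup.mem_centralizer_iff.mpr ?_⟩
            rintro h' rfl
            calc x ^ k * ((w2 : G)⁻¹ * (w1 : G))
                = x ^ k * ((w2 : G)⁻¹ * (w1 : G)) * (x ^ k)⁻¹ * x ^ k := by group
              _ = (w2 : G)⁻¹ * (w1 : G) * x ^ k := by rw [hu]
          rw [hCbot, Subgroup.mem_bot] at huC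
          exact Subtype.ext (inv_mul_eq_one.mp huC).symm
        have hfsurj : Function.Surjective f := Finite.surjective_of_injective hfinj
        obtain ⟨w, hw⟩ := hfsurj ⟨g * (x ^ k)⁻¹, hvV⟩
        have hweq : (w : G) * (x ^ k * (w : G)⁻¹ * (x ^ k)⁻¹) = g * (x ^ k)⁻¹ :=
          congrArg Subtype.val hw
        refine ⟨(w : G)⁻¹, ?_⟩
        have hconj : (w : G)⁻¹ * g * ((w : G)⁻¹)⁻¹ = x ^ k := by
          calc (w : G)⁻¹ * g * ((w : G)⁻¹)⁻¹
              = (w : G)⁻¹ * ((g * (x ^ k)⁻¹) * x ^ k) * (w : G) := by group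
            _ = (w : G)⁻¹ * (((w : G) * (x ^ k * (w : G)⁻¹ * (x ^ k)⁻¹)) * x ^ k) * (w : G) := by
                rw [hweq]
            _ = x ^ k := by group
        rw [hconj]
        exact ⟨(k : ℤ), by dsimp only; rw [zpow_natCast]⟩
    · -- case a : induct on the quotient
      have hqcard : Nat.card (G ⧸ V) ≤ n := by
        have h1 : Nat.card G = Nat.card (G ⧸ V) * Nat.card V :=
          (Subgroup.card_eq_card_quotient_mul_card_subgroup V)
        have h2 : 1 < Nat.card V := (Subgroup.one_lt_card_iff_ne_bot V).mpr hVbot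
        have h3 : 0 < Nat.card (G ⧸ V) := Nat.card_pos
        nlinarith
      have habq : IsCyclic (Abelianization (G ⧸ V)) := by
        have hsurj : Function.Surjective
            ((Abelianization.of).comp (QuotientGroup.mk' V) : G →* Abelianization (G ⧸ V)) :=
          Function.Surjective.comp
            (g := ⇑(Abelianization.of (G := G ⧸ V)))
            (fun y => QuotientGroup.induction_on y fun g => ⟨g, rfl⟩)
            (QuotientGroup.mk'_surjective V)
        have : Function.Surjective
            (Abelianization.lift ((Abelianization.of).comp (QuotientGroup.mk' V))) := by
          intro y
          obtain ⟨g, hg⟩ := hsurj y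
          exact ⟨Abelianization.of g, hg⟩
        exact isCyclic_of_surjective _ this
      obtain ⟨H', K', hH', hK', hcov⟩ := ih (G ⧸ V) hqcard hc habq
      refine ⟨H'.comap (QuotientGroup.mk' V), K'.comap (QuotientGroup.mk' V), ?_, ?_, ?_⟩
      · intro h
        apply hH'
        rw [← Subgroup.comap_top (QuotientGroup.mk' V)] at h
        exact Subgroup.comap_injective (QuotientGroup.mk'_surjective V) h
      · intro h
        apply hK'
        rw [← Subgroup.comap_top (QuotientGroup.mk' V)] at h
        exact Subgroup.comap_injective (QuotientGroup.mk'_surjective V) h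
      · intro g
        rcases hcov (QuotientGroup.mk' V g) with ⟨x, hx⟩ | ⟨x, hx⟩
        · obtain ⟨y, rfl⟩ := QuotientGroup.mk'_surjective V x
          exact Or.inl ⟨y, by simpa using hx⟩
        · obtain ⟨y, rfl⟩ := QuotientGroup.mk'_surjective V x
          exact Or.inr ⟨y, by simpa using hx⟩

/-- A finite soluble non-cyclic group `G` with `G/G'` cyclic satisfies `γ(G) = 2`. -/
theorem gamma_eq_two_of_solvable (G : Type*) [Group G] [Finite G] [Group.IsSolvable G]
    (hG : ¬ IsCyclic G) (hab : IsCyclic (Abelianization G)) :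
    normalCoveringNumber G = 2 := by
  obtain ⟨H, K, hH, hK, hcov⟩ := exists_cover_two (Nat.card G) G le_rfl hG hab
  rw [normalCoveringNumber]
  apply le_antisymm
  · apply sInf_le
    refine ⟨2, by norm_num, ![H, K], ?_, ?_⟩
    · intro i
      fin_cases i <;> simpa
    · intro g
      rcases hcov g with ⟨x, hx⟩ | ⟨x, hx⟩
      · exact ⟨0, x, by simpa using hx⟩
      · exact ⟨1, x, by simpa using hx⟩
  · apply le_sInf
    rintro b ⟨k, rfl, Hs, hne, hcv⟩
    match k with
    | 0 => obtain ⟨i, -⟩ := hcv 1; exact i.elim0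
    | 1 =>
      exfalso
      obtain ⟨g, hg⟩ := no_single_cover (Hs 0) (hne 0)
      obtain ⟨i, x, hx⟩ := hcv g
      have h0 : i = 0 := Subsingleton.elim i 0
      exact hg x (h0 ▸ hx)
    | (N + 2) =>
      exact_mod_cast le_add_self.trans_eq (by norm_num : ((N:ℕ∞) + 2) = ((N + 2 : ℕ) : ℕ∞))
end

section
/- Let G be a finite group with γ(G) = 2 such that γ(G/N) > 2 for every non-trivial normal subgroup N of G, and suppose G is the union of the conjugates of two maximal subgroups H and K. Then either soc(G) is contained in H, or soc(G) is contained in K, or G is an almost simple group. -/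
open scoped Pointwise

/-- `N` is a minimal normal subgroup of `G`. -/
def IsMinimalNormal {G : Type*} [Group G] (N : Subgroup G) : Prop :=
  N.Normal ∧ N ≠ ⊥ ∧ ∀ M : Subgroup G, M.Normal → M ≠ ⊥ → M ≤ N → M = N

/-- The socle of `G`: the subgroup generated by all minimal normal subgroups. -/
noncomputable def socle (G : Type*) [Group G] : Subgroup G :=
  sSup {N : Subgroup G | IsMinimalNormal N}

/-- `G` is almost simple: it has a non-abelian simple normal subgroup with trivial
centralizer (equivalently `S ≤ G ≤ Aut(S)` for a non-abelian simple `S`). -/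
def IsAlmostSimpleGroup (G : Type*) [Group G] : Prop :=
  ∃ S : Subgroup G, S.Normal ∧ IsSimpleGroup ↥S ∧
    (¬ ∀ a b : ↥S, a * b = b * a) ∧ Subgroup.centralizer (S : Set G) = ⊥

namespace NormCov

variable {G : Type*} [Group G]

/-- conjugate of a subgroup -/
def cj (g : G) (L : Subgroup G) : Subgroup G := L.map (MulAut.conj g).toMonoidHom

lemma mem_cj {g x : G} {L : Subgroup G} : x ∈ cj g L ↔ g⁻¹ * x * g ∈ L := by
  simp only [cj, Subgroup.mem_map, MulEquiv.coe_toMonoidHom, MulAut.conj_apply]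
  constructor
  · rintro ⟨y, hy, rfl⟩
    have h : g⁻¹ * (g * y * g⁻¹) * g = y := by group
    rwa [h]
  · intro h
    exact ⟨g⁻¹ * x * g, h, by group⟩

lemma cj_mem {g x : G} {L : Subgroup G} (hx : x ∈ L) : g * x * g⁻¹ ∈ cj g L := by
  rw [mem_cj]
  have h : g⁻¹ * (g * x * g⁻¹) * g = x := by group
  rwa [h]

lemma cj_mul {a b : G} {L : Subgroup G} : cj (a * b) L = cj a (cj b L) := by
  ext x
  simp only [mem_cj, mul_inv_rev, mul_assoc]

lemma cj_one {L : Subgroup G} : cj (1 : G) L = L := by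
  ext x; simp [mem_cj]

lemma cj_cj_inv {g : G} {L : Subgroup G} : cj g (cj g⁻¹ L) = L := by
  rw [← cj_mul, mul_inv_cancel, cj_one]

lemma cj_inv_cj {g : G} {L : Subgroup G} : cj g⁻¹ (cj g L) = L := by
  rw [← cj_mul, inv_mul_cancel, cj_one]

lemma cj_mono {g : G} {A B : Subgroup G} (h : A ≤ B) : cj g A ≤ cj g B := by
  intro x hx; rw [mem_cj] at hx ⊢; exact h hx

lemma cj_inj {g : G} {A B : Subgroup G} (h : cj g A = cj g B) : A = B := by
  have := congrArg (cj g⁻¹) h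
  rwa [cj_inv_cj, cj_inv_cj] at this

lemma cj_inf {g : G} {A B : Subgroup G} : cj g (A ⊓ B) = cj g A ⊓ cj g B := by
  ext x; simp [mem_cj, Subgroup.mem_inf]

lemma cj_bot {g : G} : cj g (⊥ : Subgroup G) = ⊥ := by
  ext x
  simp only [mem_cj, Subgroup.mem_bot]
  constructor
  · intro h
    have : x = g * (g⁻¹ * x * g) * g⁻¹ := by group
    rw [this, h]; group
  · rintro rfl; group

lemma cj_of_normal {g : G} {A : Subgroup G} [hA : A.Normal] : cj g A = A := by
  ext x
  rw [mem_cj]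
  constructor
  · intro h
    have := hA.conj_mem _ h g
    have e : g * (g⁻¹ * x * g) * g⁻¹ = x := by group
    rwa [e] at this
  · intro h
    have := hA.conj_mem _ h g⁻¹
    rwa [show g⁻¹ * x * g⁻¹⁻¹ = g⁻¹ * x * g by group] at this

lemma coatom_sup {H M : Subgroup G} (hH : IsCoatom H) (hM : ¬ M ≤ H) : H ⊔ M = ⊤ :=
  hH.2 _ (lt_of_le_of_ne le_sup_left (fun h => hM (le_sup_right.trans h.ge)))

lemma decomp {L S : Subgroup G} [S.Normal] (htop : L ⊔ S = ⊤) (g : G) :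
    ∃ l ∈ L, ∃ s ∈ S, g = l * s := by
  have hg : g ∈ L ⊔ S := htop ▸ Subgroup.mem_top g
  rw [← SetLike.mem_coe, Subgroup.mul_normal] at hg
  obtain ⟨l, hl, s, hs, h⟩ := hg
  exact ⟨l, hl, s, hs, h.symm⟩

lemma conj_reduce {L S : Subgroup G} [S.Normal] (htop : L ⊔ S = ⊤) {a : G}
    (hx : ∃ x : G, x * a * x⁻¹ ∈ L) : ∃ s ∈ S, s * a * s⁻¹ ∈ L := by
  obtain ⟨x, hx⟩ := hx
  obtain ⟨l, hl, s, hs, rfl⟩ := decomp htop x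
  refine ⟨s, hs, ?_⟩
  have e : s * a * s⁻¹ = l⁻¹ * (l * s * a * (l * s)⁻¹) * l := by group
  rw [e]
  exact mul_mem (mul_mem (inv_mem hl) hx) hl


variable {G : Type*} [Group G]

lemma exists_avoid (A : Type*) [Group A] [Finite A] (D : Subgroup A) (hD : D ≠ ⊤) :
    ∃ a : A, ∀ x : A, x * a * x⁻¹ ∉ D := by
  classical
  cases nonempty_fintype A
  by_contra hcon
  push_neg at hcon
  set cD := (Finset.univ.filter (fun x : A => x ∈ D)).card with hcD
  set F : A → Finset A := fun a => Finset.univ.filter (fun x => x * a * x⁻¹ ∈ D) with hF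
  have hrow : ∀ a : A, cD ≤ (F a).card := by
    intro a
    obtain ⟨x₀, hx₀⟩ := hcon a
    apply Finset.card_le_card_of_injOn (fun d => d * x₀)
    · intro d hd
      simp only [hcD, hF, Finset.mem_coe, Finset.mem_filter, Finset.mem_univ, true_and] at hd ⊢
      have e : d * x₀ * a * (d * x₀)⁻¹ = d * (x₀ * a * x₀⁻¹) * d⁻¹ := by group
      rw [e]
      exact D.mul_mem (D.mul_mem hd hx₀) (D.inv_mem hd)
    · intro u _ v _ h
      exact mul_right_cancel h
  have h1 : (F 1).card = Fintype.card A := by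
    simp only [hF]
    rw [Finset.filter_true_of_mem, Finset.card_univ]
    intro x _
    simpa using D.one_mem
  have hlt : cD < Fintype.card A := by
    obtain ⟨y, hy⟩ : ∃ y : A, y ∉ D := by
      by_contra h; push_neg at h; exact hD ((Subgroup.eq_top_iff' D).mpr h)
    rw [← Finset.card_univ]
    apply Finset.card_lt_card
    rw [Finset.ssubset_iff_of_subset (Finset.filter_subset _ _)]
    exact ⟨y, Finset.mem_univ y, by simp [hy]⟩
  have hcol : ∀ x : A, (Finset.univ.filter (fun a => x * a * x⁻¹ ∈ D)).card = cD := by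
    intro x
    rw [hcD]
    apply Finset.card_bij (fun a _ => x * a * x⁻¹)
    · intro a ha
      simp only [Finset.mem_filter, Finset.mem_univ, true_and] at ha ⊢
      exact ha
    · intro a ha b hb h
      have h2 : x * a = x * b := mul_right_cancel h
      exact mul_left_cancel h2
    · intro b hb
      simp only [Finset.mem_filter, Finset.mem_univ, true_and] at hb
      refine ⟨x⁻¹ * b * x, ?_, by group⟩
      simp only [Finset.mem_filter, Finset.mem_univ, true_and]
      have e : x * (x⁻¹ * b * x) * x⁻¹ = b := by group
      rwa [e]
  have hsum : ∑ a : A, (F a).card = ∑ x : A, (Finset.univ.filter (fun a => x * a * x⁻¹ ∈ D)).card := by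
    simp only [hF, Finset.card_filter]
    exact Finset.sum_comm
  have hstrict : ∑ _a : A, cD < ∑ a : A, (F a).card :=
    Finset.sum_lt_sum (fun a _ => hrow a) ⟨1, Finset.mem_univ 1, by rw [h1]; exact hlt⟩
  rw [hsum] at hstrict
  simp only [hcol, Finset.sum_const, Finset.card_univ, smul_eq_mul] at hstrict
  exact lt_irrefl _ hstrict

lemma exists_avoid_sub [Finite G] (W D : Subgroup G) (hle : D ≤ W) (hne : D ≠ W) :
    ∃ w ∈ W, w ≠ 1 ∧ ∀ x ∈ W, x * w * x⁻¹ ∉ D := by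
  have hD : D.subgroupOf W ≠ ⊤ := by
    intro h
    exact hne (le_antisymm hle (Subgroup.subgroupOf_eq_top.mp h))
  obtain ⟨a, ha⟩ := exists_avoid W (D.subgroupOf W) hD
  refine ⟨(a : G), a.2, ?_, ?_⟩
  · intro h1
    apply ha 1
    rw [Subgroup.mem_subgroupOf]
    have : ((1 * a * 1⁻¹ : ↥W) : G) = 1 := by
      push_cast
      simp [h1]
    rw [this]
    exact D.one_mem
  · intro x hx hmem
    apply ha ⟨x, hx⟩
    rw [Subgroup.mem_subgroupOf]
    exact hmem

lemma exists_minimal_subgroup [Finite G] (S : Set (Subgroup G)) (hne : S.Nonempty) :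
    ∃ V ∈ S, ∀ V' ∈ S, V' ≤ V → V' = V := by
  obtain ⟨W, hW⟩ := hne
  set  ns : Set ℕ := (fun V : Subgroup G => Nat.card V) '' S with hns
  have hnsne : ns.Nonempty := ⟨_, W, hW, rfl⟩
  obtain ⟨V, hV, hVcard⟩ := Nat.sInf_mem hnsne
  refine ⟨V, hV, ?_⟩
  intro V' hV' hle
  have hcardle : Nat.card V ≤ Nat.card V' := by
    have := Nat.sInf_le (show Nat.card V' ∈ ns from ⟨V', hV', rfl⟩)
    simpa [← hVcard] using this
  have hsub : (V' : Set G) ⊆ (V : Set G) := hle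
  have hfin : (V : Set G).Finite := Set.toFinite _
  have : (V' : Set G) = (V : Set G) := by
    apply Set.eq_of_subset_of_ncard_le hsub _ hfin
    rw [← Nat.card_coe_set_eq, ← Nat.card_coe_set_eq]
    exact hcardle
  exact SetLike.coe_injective this


lemma quot_cover_le_two {G : Type*} [Group G] (W H K : Subgroup G) [W.Normal]
    (hH : H ≠ ⊤) (hK : K ≠ ⊤) (hWH : W ≤ H) (hWK : W ≤ K)
    (hcover : ∀ g : G, (∃ x : G, x * g * x⁻¹ ∈ H) ∨ (∃ x : G, x * g * x⁻¹ ∈ K)) :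
    normalCoveringNumber (G ⧸ W) ≤ 2 := by
  have key : ∀ L : Subgroup G, W ≤ L → L ≠ ⊤ → L.map (QuotientGroup.mk' W) ≠ ⊤ := by
    intro L hWL hL h
    apply hL
    rw [Subgroup.eq_top_iff']
    intro g
    have hmem : QuotientGroup.mk' W g ∈ L.map (QuotientGroup.mk' W) := h ▸ Subgroup.mem_top _
    obtain ⟨l, hl, hlg⟩ := hmem
    have hW : l⁻¹ * g ∈ W := by
      apply (QuotientGroup.eq (s := W)).mp
      simpa using hlg
    have := L.mul_mem hl (hWL hW)
    simpa using this
  have hconj : ∀ (L : Subgroup G) (x g : G), x * g * x⁻¹ ∈ L →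
      (QuotientGroup.mk' W) x * (QuotientGroup.mk' W) g * ((QuotientGroup.mk' W) x)⁻¹
        ∈ L.map (QuotientGroup.mk' W) := by
    intro L x g hx
    have e : (QuotientGroup.mk' W) x * (QuotientGroup.mk' W) g * ((QuotientGroup.mk' W) x)⁻¹
        = (QuotientGroup.mk' W) (x * g * x⁻¹) := by
      simp [map_mul]
    rw [e]
    exact Subgroup.mem_map_of_mem _ hx
  apply sInf_le
  refine ⟨2, by norm_cast, ![H.map (QuotientGroup.mk' W), K.map (QuotientGroup.mk' W)], ?_, ?_⟩
  · intro i
    fin_cases i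
    · exact key H hWH hH
    · exact key K hWK hK
  · intro q
    obtain ⟨g, rfl⟩ := QuotientGroup.mk'_surjective W q
    rcases hcover g with ⟨x, hx⟩ | ⟨x, hx⟩
    · exact ⟨0, QuotientGroup.mk' W x, hconj H x g hx⟩
    · exact ⟨1, QuotientGroup.mk' W x, hconj K x g hx⟩


variable {G : Type*} [Group G]

lemma centralizer_normal (S : Subgroup G) [hSn : S.Normal] :
    (Subgroup.centralizer (S : Set G)).Normal := by
  constructor
  intro c hc g
  rw [Subgroup.mem_centralizer_iff] at hc ⊢
  intro s hs
  have hgs : g⁻¹ * s * g ∈ S := by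
    have := hSn.conj_mem s hs g⁻¹
    rwa [inv_inv] at this
  have h := hc _ hgs
  have e : s * (g * c * g⁻¹) = g * ((g⁻¹ * s * g) * c) * g⁻¹ := by group
  rw [e, h]
  group

lemma coreA [Finite G] (H K S M : Subgroup G)
    (hH : IsCoatom H) (hK : IsCoatom K)
    (hcover : ∀ g : G, (∃ x : G, x * g * x⁻¹ ∈ H) ∨ (∃ x : G, x * g * x⁻¹ ∈ K))
    [hSn : S.Normal] (hSbot : S ≠ ⊥)
    (hmin : ∀ W : Subgroup G, W.Normal → W ≠ ⊥ → W ≤ S → W = S)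
    (hSH : ¬ S ≤ H) (hSK : ¬ S ≤ K)
    (hMC : M ≤ Subgroup.centralizer (S : Set G)) (hMK : ¬ M ≤ K) : False := by
  have hKM : K ⊔ M = ⊤ := coatom_sup hK hMK
  have hHS : H ⊔ S = ⊤ := coatom_sup hH hSH
  have hKSnorm : (K ⊓ S).Normal := by
    rw [← Subgroup.normalizer_eq_top_iff, ← top_le_iff, ← hKM, sup_le_iff]
    constructor
    · intro k hk
      rw [Subgroup.mem_normalizer_iff]
      intro h
      constructor
      · rintro ⟨h1, h2⟩
        exact ⟨K.mul_mem (K.mul_mem hk h1) (K.inv_mem hk), hSn.conj_mem _ h2 k⟩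
      · rintro ⟨h1, h2⟩
        have e : h = k⁻¹ * (k * h * k⁻¹) * k := by group
        rw [e]
        constructor
        · exact K.mul_mem (K.mul_mem (K.inv_mem hk) h1) hk
        · have := hSn.conj_mem _ h2 k⁻¹
          rwa [inv_inv] at this
    · intro m hm
      rw [Subgroup.mem_normalizer_iff]
      intro h
      have key : ∀ x ∈ S, m * x * m⁻¹ = x := by
        intro x hx
        have := hMC hm x hx
        rw [← this]
        group
      constructor
      · rintro ⟨h1, h2⟩
        rw [key h h2]
        exact ⟨h1, h2⟩
      · rintro ⟨h1, h2⟩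
        have h2' : h ∈ S := by
          have e : h = m⁻¹ * (m * h * m⁻¹) * m := by group
          rw [e]
          have := hSn.conj_mem _ h2 m⁻¹
          rwa [inv_inv] at this
        rw [key h h2'] at h1
        exact ⟨h1, h2'⟩
  have hKSbot : K ⊓ S = ⊥ := by
    by_contra hne
    have heq := hmin (K ⊓ S) hKSnorm hne inf_le_right
    exact hSK (by rw [← heq]; exact inf_le_left)
  have hHSne : H ⊓ S ≠ S := fun h => hSH (inf_eq_right.mp h)
  obtain ⟨n₀, hn₀S, hn₀ne, hn₀⟩ := exists_avoid_sub S (H ⊓ S) inf_le_right hHSne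
  rcases hcover n₀ with hx | hx
  · obtain ⟨s, hs, hmem⟩ := conj_reduce hHS hx
    exact hn₀ s hs ⟨hmem, S.mul_mem (S.mul_mem hs hn₀S) (S.inv_mem hs)⟩
  · obtain ⟨x, hx⟩ := hx
    have hmem : x * n₀ * x⁻¹ ∈ K ⊓ S := ⟨hx, hSn.conj_mem _ hn₀S x⟩
    rw [hKSbot, Subgroup.mem_bot] at hmem
    apply hn₀ne
    have e : n₀ = x⁻¹ * (x * n₀ * x⁻¹) * x := by group
    rw [e, hmem]
    group

/-! ### Part B: structure of the minimal normal subgroup -/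

/-- `V` is contained in `S` and stable under conjugation by `S`. -/
def Stab (S V : Subgroup G) : Prop :=
  V ≤ S ∧ ∀ s ∈ S, ∀ v ∈ V, s * v * s⁻¹ ∈ V

lemma stab_cj {S V : Subgroup G} [hSn : S.Normal] (hV : Stab S V) (g : G) :
    Stab S (cj g V) := by
  constructor
  · intro x hx
    rw [mem_cj] at hx
    have := hV.1 hx
    have h2 : g * (g⁻¹ * x * g) * g⁻¹ ∈ S := hSn.conj_mem _ this g
    rwa [show g * (g⁻¹ * x * g) * g⁻¹ = x by group] at h2
  · intro s hs v hv
    rw [mem_cj] at hv ⊢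
    have hs' : g⁻¹ * s * g ∈ S := by
      have := hSn.conj_mem s hs g⁻¹
      rwa [inv_inv] at this
    have := hV.2 _ hs' _ hv
    rwa [show (g⁻¹*s*g) * (g⁻¹*v*g) * (g⁻¹*s*g)⁻¹ = g⁻¹ * (s*v*s⁻¹) * g by group] at this

lemma stab_fix {S V : Subgroup G} (hV : Stab S V) {s : G} (hs : s ∈ S) :
    cj s V = V := by
  ext x
  rw [mem_cj]
  constructor
  · intro h
    have := hV.2 s hs _ h
    rwa [show s * (s⁻¹*x*s) * s⁻¹ = x by group] at this
  · intro h
    have := hV.2 s⁻¹ (S.inv_mem hs) _ h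
    rwa [inv_inv] at this

lemma stab_inf {S V V' : Subgroup G} (h : Stab S V) (h' : Stab S V') :
    Stab S (V ⊓ V') :=
  ⟨inf_le_left.trans h.1, fun s hs v hv => ⟨h.2 s hs v hv.1, h'.2 s hs v hv.2⟩⟩

/-- The "complement" of the conjugate `P` of `T`: the subgroup generated by all
conjugates of `T` different from `P`. -/
def compl' (T P : Subgroup G) : Subgroup G :=
  Subgroup.closure {x : G | ∃ g : G, cj g T ≠ P ∧ x ∈ cj g T}

/-- The projection-to-`P` of `L`, relative to the decomposition `P * C`. -/
def projS (P C L : Subgroup G) (hc : ∀ a ∈ P, ∀ b ∈ C, a * b = b * a) : Subgroup G where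
  carrier := {x : G | x ∈ P ∧ ∃ b ∈ C, x * b ∈ L}
  one_mem' := ⟨P.one_mem, 1, C.one_mem, by simpa using L.one_mem⟩
  mul_mem' := by
    rintro x y ⟨hxP, bx, hbx, hxb⟩ ⟨hyP, by', hby, hyb⟩
    refine ⟨P.mul_mem hxP hyP, bx * by', C.mul_mem hbx hby, ?_⟩
    have e : (x * y) * (bx * by') = (x * bx) * (y * by') := by
      have := hc y hyP bx hbx
      calc (x*y)*(bx*by') = x * (y * bx) * by' := by group
        _ = x * (bx * y) * by' := by rw [this]
        _ = (x * bx) * (y * by') := by group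
    rw [e]
    exact L.mul_mem hxb hyb
  inv_mem' := by
    rintro x ⟨hxP, b, hb, hxb⟩
    refine ⟨P.inv_mem hxP, b⁻¹, C.inv_mem hb, ?_⟩
    have e : x⁻¹ * b⁻¹ = (b * x)⁻¹ := by group
    rw [e, ← hc x hxP b hb]
    exact L.inv_mem hxb

lemma mem_projS {P C L : Subgroup G} {hc} {x : G} :
    x ∈ projS P C L hc ↔ x ∈ P ∧ ∃ b ∈ C, x * b ∈ L := Iff.rfl

lemma projS_le {P C L : Subgroup G} {hc} : projS P C L hc ≤ P := fun _ h => h.1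

/-- Context for the main structural argument. -/
structure Ctx (G : Type*) [Group G] where
  H : Subgroup G
  K : Subgroup G
  S : Subgroup G
  T : Subgroup G
  hH : IsCoatom H
  hK : IsCoatom K
  hcover : ∀ g : G, (∃ x : G, x * g * x⁻¹ ∈ H) ∨ (∃ x : G, x * g * x⁻¹ ∈ K)
  hSn : S.Normal
  hSbot : S ≠ ⊥
  hmin : ∀ W : Subgroup G, W.Normal → W ≠ ⊥ → W ≤ S → W = S
  hSH : ¬ S ≤ H
  hSK : ¬ S ≤ K
  hnab : ¬ ∀ a ∈ S, ∀ b ∈ S, a * b = b * a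
  hTbot : T ≠ ⊥
  hTS : T ≤ S
  hTst : ∀ s ∈ S, ∀ t ∈ T, s * t * s⁻¹ ∈ T
  hTmin : ∀ V : Subgroup G, V ≠ ⊥ → V ≤ S → (∀ s ∈ S, ∀ v ∈ V, s * v * s⁻¹ ∈ V) →
    V ≤ T → V = T

namespace Ctx

variable {c : Ctx G}

lemma stabT (c : Ctx G) : Stab c.S c.T := ⟨c.hTS, c.hTst⟩

lemma stab_cjT (c : Ctx G) (g : G) : Stab c.S (cj g c.T) := by
  haveI := c.hSn
  exact stab_cj c.stabT g

lemma cjT_min (c : Ctx G) (g : G) :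
    ∀ V : Subgroup G, V ≠ ⊥ → Stab c.S V → V ≤ cj g c.T → V = cj g c.T := by
  intro V hVbot hVstab hVle
  haveI := c.hSn
  have h1 : cj g⁻¹ V ≠ ⊥ := by
    intro h
    apply hVbot
    have := congrArg (cj g) h
    rwa [cj_cj_inv, cj_bot] at this
  have h2 : Stab c.S (cj g⁻¹ V) := stab_cj hVstab g⁻¹
  have h3 : cj g⁻¹ V ≤ c.T := by
    have := cj_mono (g := g⁻¹) hVle
    rwa [cj_inv_cj] at this
  have := c.hTmin _ h1 h2.1 h2.2 h3
  have := congrArg (cj g) this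
  rwa [cj_cj_inv] at this

lemma reach (c : Ctx G) {L : Subgroup G} (hLS : L ⊔ c.S = ⊤) (g : G) :
    ∃ l ∈ L, cj g c.T = cj l c.T := by
  haveI := c.hSn
  obtain ⟨l, hl, s, hs, rfl⟩ := decomp hLS g
  exact ⟨l, hl, by rw [cj_mul, stab_fix c.stabT hs]⟩

lemma disj (c : Ctx G) {g g' : G} (h : cj g c.T ≠ cj g' c.T) :
    cj g c.T ⊓ cj g' c.T = ⊥ := by
  by_contra hne
  have h1 := c.cjT_min g _ hne (stab_inf (c.stab_cjT g) (c.stab_cjT g')) inf_le_left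
  have h2 := c.cjT_min g' _ hne (stab_inf (c.stab_cjT g) (c.stab_cjT g')) inf_le_right
  exact h (h1.symm.trans h2)

lemma commT (c : Ctx G) {g g' : G} (h : cj g c.T ≠ cj g' c.T) :
    ∀ a ∈ cj g c.T, ∀ b ∈ cj g' c.T, a * b = b * a := by
  intro a ha b hb
  have haS : a ∈ c.S := (c.stab_cjT g).1 ha
  have hbS : b ∈ c.S := (c.stab_cjT g').1 hb
  have hmem : a * b * a⁻¹ * b⁻¹ ∈ cj g c.T ⊓ cj g' c.T := by
    constructor
    · have h1 : b * a⁻¹ * b⁻¹ ∈ cj g c.T := (c.stab_cjT g).2 b hbS _ ((cj g c.T).inv_mem ha)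
      have e : a * b * a⁻¹ * b⁻¹ = a * (b * a⁻¹ * b⁻¹) := by group
      rw [e]
      exact (cj g c.T).mul_mem ha h1
    · have h1 : a * b * a⁻¹ ∈ cj g' c.T := (c.stab_cjT g').2 a haS _ hb
      exact (cj g' c.T).mul_mem h1 ((cj g' c.T).inv_mem hb)
  rw [c.disj h, Subgroup.mem_bot] at hmem
  calc a * b = (a * b * a⁻¹ * b⁻¹) * (b * a) := by group
    _ = b * a := by rw [hmem]; group

lemma E_eq (c : Ctx G) :
    Subgroup.closure {x : G | ∃ g : G, x ∈ cj g c.T} = c.S := by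
  apply c.hmin
  · constructor
    intro n hn g
    induction hn using Subgroup.closure_induction with
    | mem x hx =>
      obtain ⟨g₀, hx⟩ := hx
      apply Subgroup.subset_closure
      refine ⟨g * g₀, ?_⟩
      rw [mem_cj] at hx ⊢
      rwa [show (g*g₀)⁻¹ * (g*x*g⁻¹) * (g*g₀) = g₀⁻¹ * x * g₀ from by group]
    | one => simpa using Subgroup.one_mem _
    | mul x y hx hy hx' hy' =>
      rw [show g*(x*y)*g⁻¹ = (g*x*g⁻¹)*(g*y*g⁻¹) from by group]
      exact Subgroup.mul_mem _ hx' hy'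
    | inv x hx hx' =>
      rw [show g*x⁻¹*g⁻¹ = (g*x*g⁻¹)⁻¹ from by group]
      exact Subgroup.inv_mem _ hx'
  · intro h
    apply c.hTbot
    rw [eq_bot_iff, ← h]
    intro x hx
    exact Subgroup.subset_closure ⟨1, by rwa [cj_one]⟩
  · rw [Subgroup.closure_le]
    rintro x ⟨g, hx⟩
    exact (c.stab_cjT g).1 hx

lemma habel (c : Ctx G) (h : ∀ a ∈ c.T, ∀ b ∈ c.T, a * b = b * a) : False := by
  apply c.hnab
  have hconj : ∀ g : G, ∀ a ∈ cj g c.T, ∀ b ∈ cj g c.T, a * b = b * a := by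
    intro g a ha b hb
    rw [mem_cj] at ha hb
    have := h _ ha _ hb
    have e : g * ((g⁻¹*a*g) * (g⁻¹*b*g)) * g⁻¹ = a * b := by group
    have e' : g * ((g⁻¹*b*g) * (g⁻¹*a*g)) * g⁻¹ = b * a := by group
    rw [← e, ← e', this]
  have key : ∀ x ∈ c.S, ∀ y ∈ c.S, Commute x y := by
    have hE := c.E_eq
    intro x hx y hy
    rw [← hE] at hx hy
    induction hx, hy using Subgroup.closure_induction₂ with
    | mem a b ha hb =>
      obtain ⟨g, ha⟩ := ha
      obtain ⟨g', hb⟩ := hb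
      by_cases hgg : cj g c.T = cj g' c.T
      · exact hconj g' a (hgg ▸ ha) b hb
      · exact c.commT hgg a ha b hb
    | one_left x hx => exact Commute.one_left x
    | one_right x hx => exact Commute.one_right x
    | mul_left x y z hx hy hz h1 h2 => exact h1.mul_left h2
    | mul_right y z x hy hz hx h1 h2 => exact h1.mul_right h2
    | inv_left x y hx hy h1 => exact h1.inv_left
    | inv_right x y hx hy h1 => exact h1.inv_right
  exact fun a ha b hb => key a ha b hb

lemma comp_le (c : Ctx G) {P : Subgroup G} (hP : ∃ g, P = cj g c.T) :
    compl' c.T P ≤ c.S := by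
  rw [compl', Subgroup.closure_le]
  rintro x ⟨g, _, hx⟩
  exact (c.stab_cjT g).1 hx

lemma comp_stab (c : Ctx G) {P : Subgroup G} (hP : ∃ g, P = cj g c.T) :
    Stab c.S (compl' c.T P) := by
  refine ⟨c.comp_le hP, ?_⟩
  intro s hs v hv
  induction hv using Subgroup.closure_induction with
  | mem x hx =>
    obtain ⟨g, hne, hx⟩ := hx
    apply Subgroup.subset_closure
    refine ⟨g, hne, ?_⟩
    rw [← stab_fix (c.stab_cjT g) hs]
    exact cj_mem hx
  | one => simpa using Subgroup.one_mem _
  | mul x y hx hy hx' hy' =>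
    rw [show s*(x*y)*s⁻¹ = (s*x*s⁻¹)*(s*y*s⁻¹) from by group]
    exact Subgroup.mul_mem _ hx' hy'
  | inv x hx hx' =>
    rw [show s*x⁻¹*s⁻¹ = (s*x*s⁻¹)⁻¹ from by group]
    exact Subgroup.inv_mem _ hx'

lemma comp_central (c : Ctx G) {P : Subgroup G} (hP : ∃ g, P = cj g c.T) :
    ∀ a ∈ P, ∀ b ∈ compl' c.T P, a * b = b * a := by
  obtain ⟨gP, rfl⟩ := hP
  intro a ha b hb
  induction hb using Subgroup.closure_induction with
  | mem x hx =>
    obtain ⟨g, hne, hx⟩ := hx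
    exact (c.commT (fun h => hne h) x hx a ha).symm
  | one => simp
  | mul x y hx hy hx' hy' =>
    calc a*(x*y) = (a*x)*y := by group
      _ = (x*a)*y := by rw [hx']
      _ = x*(a*y) := by group
      _ = x*(y*a) := by rw [hy']
      _ = (x*y)*a := by group
  | inv x hx hx' =>
    calc a * x⁻¹ = x⁻¹*(x*a)*x⁻¹ := by group
      _ = x⁻¹*(a*x)*x⁻¹ := by rw [← hx']
      _ = x⁻¹*a := by group

lemma comp_inf (c : Ctx G) {P : Subgroup G} (hP : ∃ g, P = cj g c.T) :
    P ⊓ compl' c.T P = ⊥ := by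
  obtain ⟨gP, rfl⟩ := hP
  by_contra hne
  have hstab : Stab c.S (cj gP c.T ⊓ compl' c.T (cj gP c.T)) :=
    stab_inf (c.stab_cjT gP) (c.comp_stab ⟨gP, rfl⟩)
  have heq := c.cjT_min gP (cj gP c.T ⊓ compl' c.T (cj gP c.T)) hne hstab inf_le_left
  have hle : cj gP c.T ≤ compl' c.T (cj gP c.T) := heq.symm.trans_le inf_le_right
  -- then P is abelian, hence T is abelian
  apply c.habel
  intro a ha b hb
  have ha' : gP * a * gP⁻¹ ∈ cj gP c.T := cj_mem ha
  have hb' : gP * b * gP⁻¹ ∈ cj gP c.T := cj_mem hb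
  have := c.comp_central ⟨gP, rfl⟩ _ ha' _ (hle hb')
  have e : gP * (a*b) * gP⁻¹ = (gP*a*gP⁻¹) * (gP*b*gP⁻¹) := by group
  have e' : gP * (b*a) * gP⁻¹ = (gP*b*gP⁻¹) * (gP*a*gP⁻¹) := by group
  have e2 : gP * (a*b) * gP⁻¹ = gP * (b*a) * gP⁻¹ := by rw [e, e', this]
  have e3 := congrArg (fun x => gP⁻¹ * x * gP) e2
  simpa [show ∀ y : G, gP⁻¹ * (gP * y * gP⁻¹) * gP = y from fun y => by group] using e3

lemma comp_sup (c : Ctx G) {P : Subgroup G} (hP : ∃ g, P = cj g c.T) :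
    P ⊔ compl' c.T P = c.S := by
  obtain ⟨gP, rfl⟩ := hP
  apply le_antisymm
  · apply sup_le
    · exact (c.stab_cjT gP).1
    · exact c.comp_le ⟨gP, rfl⟩
  · rw [← c.E_eq, Subgroup.closure_le]
    rintro x ⟨g, hx⟩
    by_cases h : cj g c.T = cj gP c.T
    · exact SetLike.le_def.mp le_sup_left (h ▸ hx)
    · apply SetLike.le_def.mp le_sup_right
      apply Subgroup.subset_closure
      exact ⟨g, h, hx⟩

lemma comp_decomp (c : Ctx G) {P : Subgroup G} (hP : ∃ g, P = cj g c.T) :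
    ∀ s ∈ c.S, ∃ a ∈ P, ∃ b ∈ compl' c.T P, s = a * b := by
  intro s hs
  have hc := c.comp_central hP
  let D : Subgroup G :=
    { carrier := {x : G | ∃ a ∈ P, ∃ b ∈ compl' c.T P, x = a * b}
      one_mem' := ⟨1, P.one_mem, 1, (compl' c.T P).one_mem, by simp⟩
      mul_mem' := by
        rintro x y ⟨a, ha, b, hb, rfl⟩ ⟨a', ha', b', hb', rfl⟩
        refine ⟨a * a', P.mul_mem ha ha', b * b', (compl' c.T P).mul_mem hb hb', ?_⟩
        calc (a*b)*(a'*b') = a * (b * a') * b' := by group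
          _ = a * (a' * b) * b' := by rw [← hc a' ha' b hb]
          _ = (a*a') * (b*b') := by group
      inv_mem' := by
        rintro x ⟨a, ha, b, hb, rfl⟩
        refine ⟨a⁻¹, P.inv_mem ha, b⁻¹, (compl' c.T P).inv_mem hb, ?_⟩
        rw [show (a*b)⁻¹ = b⁻¹ * a⁻¹ from by group]
        have := hc a⁻¹ (P.inv_mem ha) b⁻¹ ((compl' c.T P).inv_mem hb)
        rw [this] }
  have hSD : c.S ≤ D := by
    rw [← c.comp_sup hP]
    apply sup_le
    · intro a ha
      exact ⟨a, ha, 1, (compl' c.T P).one_mem, by simp⟩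
    · intro b hb
      exact ⟨1, P.one_mem, b, hb, by simp⟩
  exact hSD hs

end Ctx

lemma cj_self {L : Subgroup G} {l : G} (hl : l ∈ L) : cj l L = L := by
  ext x
  rw [mem_cj]
  constructor
  · intro h
    have := L.mul_mem (L.mul_mem hl h) (L.inv_mem hl)
    rwa [show l * (l⁻¹*x*l) * l⁻¹ = x from by group] at this
  · intro h
    exact L.mul_mem (L.mul_mem (L.inv_mem hl) h) hl

lemma cj_inf_self {L S : Subgroup G} [S.Normal] {l : G} (hl : l ∈ L) :
    cj l (L ⊓ S) = L ⊓ S := by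
  rw [cj_inf, cj_self hl, cj_of_normal]

lemma cj_closure {g : G} {X : Set G} :
    cj g (Subgroup.closure X) = Subgroup.closure ((fun x => g * x * g⁻¹) '' X) := by
  rw [cj, MonoidHom.map_closure]
  congr 1

lemma projS_cj {P C L : Subgroup G} (hc : ∀ a ∈ P, ∀ b ∈ C, a * b = b * a) (g : G)
    (hc' : ∀ a ∈ cj g P, ∀ b ∈ cj g C, a * b = b * a) :
    cj g (projS P C L hc) = projS (cj g P) (cj g C) (cj g L) hc' := by
  ext x
  rw [mem_cj, mem_projS, mem_projS]
  constructor
  · rintro ⟨hxP, b, hb, hxb⟩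
    refine ⟨mem_cj.mpr hxP, g * b * g⁻¹, cj_mem hb, ?_⟩
    rw [mem_cj]
    rwa [show g⁻¹ * (x * (g*b*g⁻¹)) * g = (g⁻¹*x*g) * b from by group]
  · rintro ⟨hxP, b, hb, hxb⟩
    rw [mem_cj] at hb hxb
    refine ⟨mem_cj.mp hxP, g⁻¹ * b * g, hb, ?_⟩
    rwa [show (g⁻¹*x*g) * (g⁻¹*b*g) = g⁻¹ * (x*b) * g from by group]

lemma projS_congr {P P' C C' L L' : Subgroup G} (hP : P = P') (hC : C = C') (hL : L = L')
    {hc : ∀ a ∈ P, ∀ b ∈ C, a * b = b * a} {hc' : ∀ a ∈ P', ∀ b ∈ C', a * b = b * a} :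
    projS P C L hc = projS P' C' L' hc' := by
  subst hP; subst hC; subst hL; rfl

namespace Ctx

lemma comp_cj (c : Ctx G) (g : G) (P : Subgroup G) :
    cj g (compl' c.T P) = compl' c.T (cj g P) := by
  rw [compl', compl', cj_closure]
  congr 1
  ext y
  constructor
  · rintro ⟨x, ⟨g₀, hne, hx⟩, rfl⟩
    refine ⟨g * g₀, fun h => hne ?_, ?_⟩
    · rw [cj_mul] at h; exact cj_inj h
    · rw [cj_mul]; exact cj_mem hx
  · rintro ⟨g₁, hne, hy⟩
    refine ⟨g⁻¹ * y * g, ⟨g⁻¹ * g₁, fun h => hne ?_, ?_⟩, by group⟩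
    · rw [cj_mul] at h
      have h2 := congrArg (cj g) h
      rw [cj_cj_inv] at h2
      exact h2
    · rw [mem_cj] at hy ⊢
      rwa [show (g⁻¹*g₁)⁻¹ * (g⁻¹*y*g) * (g⁻¹*g₁) = g₁⁻¹ * y * g₁ from by group]

lemma dichot [Finite G] (c : Ctx G) {L : Subgroup G}
    (hLS : L ⊔ c.S = ⊤) (hSL : ¬ c.S ≤ L) :
    projS c.T (compl' c.T c.T) (L ⊓ c.S) (c.comp_central ⟨1, cj_one.symm⟩) ≠ c.T ∨
      ∀ g : G, (L ⊓ c.S) ⊓ cj g c.T = ⊥ := by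
  haveI := c.hSn
  set B := compl' c.T c.T with hB
  by_cases hfull : projS c.T B (L ⊓ c.S) (c.comp_central ⟨1, cj_one.symm⟩) = c.T
  · right
    have hstab : Stab c.S ((L ⊓ c.S) ⊓ c.T) := by
      refine ⟨inf_le_right.trans c.hTS, ?_⟩
      intro s hs w hw
      obtain ⟨a, ha, b, hb, rfl⟩ := c.comp_decomp ⟨1, cj_one.symm⟩ s hs
      have hwT : w ∈ c.T := hw.2
      have hbw : b * w * b⁻¹ = w := by
        have h := c.comp_central ⟨1, cj_one.symm⟩ w hwT b hb
        rw [← h]; group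
      have e1 : (a*b) * w * (a*b)⁻¹ = a * (b*w*b⁻¹) * a⁻¹ := by group
      rw [e1, hbw]
      have haP : a ∈ projS c.T B (L ⊓ c.S) (c.comp_central ⟨1, cj_one.symm⟩) := by
        rw [hfull]; exact ha
      obtain ⟨-, b₀, hb₀, hab₀⟩ := haP
      have hb₀w : b₀ * w * b₀⁻¹ = w := by
        have h := c.comp_central ⟨1, cj_one.symm⟩ w hwT b₀ hb₀
        rw [← h]; group
      constructor
      · have e2 : a * w * a⁻¹ = (a*b₀) * w * (a*b₀)⁻¹ := by
          rw [show (a*b₀) * w * (a*b₀)⁻¹ = a * (b₀*w*b₀⁻¹) * a⁻¹ from by group, hb₀w]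
        rw [e2]
        exact (L ⊓ c.S).mul_mem ((L ⊓ c.S).mul_mem hab₀ hw.1) ((L ⊓ c.S).inv_mem hab₀)
      · exact c.hTst a (c.hTS ha) w hwT
    by_cases hbot : (L ⊓ c.S) ⊓ c.T = ⊥
    · intro g
      obtain ⟨l, hl, hgl⟩ := c.reach hLS g
      rw [hgl, ← cj_inf_self (S := c.S) hl, ← cj_inf, hbot, cj_bot]
    · exfalso
      have heqT := c.hTmin _ hbot hstab.1 hstab.2 inf_le_right
      have hTL : c.T ≤ L := by
        rw [← heqT]
        exact inf_le_left.trans inf_le_left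
      apply hSL
      rw [← c.E_eq, Subgroup.closure_le]
      rintro x ⟨g', hx⟩
      obtain ⟨l, hl, hgl⟩ := c.reach hLS g'
      rw [hgl] at hx
      have hmono := cj_mono (g := l) hTL
      rw [cj_self hl] at hmono
      exact hmono hx
  · left; exact hfull

lemma coreB_T [Finite G] (c : Ctx G) : c.T = c.S := by
  by_contra hTneS
  haveI := c.hSn
  have hHS : c.H ⊔ c.S = ⊤ := coatom_sup c.hH c.hSH
  have hKS : c.K ⊔ c.S = ⊤ := coatom_sup c.hK c.hSK
  have hcT : ∀ a ∈ c.T, ∀ b ∈ compl' c.T c.T, a * b = b * a :=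
    c.comp_central ⟨1, cj_one.symm⟩
  have hkill : ∀ L : Subgroup G, (∀ g : G, (L ⊓ c.S) ⊓ cj g c.T = ⊥) →
      ∀ t ∈ c.T, (∃ s ∈ c.S, s * t * s⁻¹ ∈ L) → t = 1 := by
    rintro L hL2 t htT ⟨s, hs, hmem⟩
    have h1 : s*t*s⁻¹ ∈ (L ⊓ c.S) ⊓ c.T :=
      ⟨⟨hmem, c.hSn.conj_mem t (c.hTS htT) s⟩, c.hTst s hs t htT⟩
    have h2 := hL2 1
    rw [cj_one] at h2
    rw [h2, Subgroup.mem_bot] at h1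
    calc t = s⁻¹ * (s*t*s⁻¹) * s := by group
      _ = 1 := by rw [h1]; group
  have hbasekill : ∀ L : Subgroup G, ∀ t ∈ c.T,
      (∀ a ∈ c.T, a * t * a⁻¹ ∉ projS c.T (compl' c.T c.T) (L ⊓ c.S) hcT) →
      ∀ y ∈ compl' c.T c.T, (∃ s ∈ c.S, s * (t * y) * s⁻¹ ∈ L) → False := by
    rintro L t htT havoid y hy ⟨s, hs, hmem⟩
    have hα : s*t*s⁻¹ ∈ c.T := c.hTst s hs t htT
    have hβ : s*y*s⁻¹ ∈ compl' c.T c.T := (c.comp_stab ⟨1, cj_one.symm⟩).2 s hs y hy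
    have hty : t * y ∈ c.S := c.S.mul_mem (c.hTS htT) ((c.comp_le ⟨1, cj_one.symm⟩) hy)
    have hαU : s*t*s⁻¹ ∈ projS c.T (compl' c.T c.T) (L ⊓ c.S) hcT := by
      refine ⟨hα, s*y*s⁻¹, hβ, ?_⟩
      rw [show (s*t*s⁻¹) * (s*y*s⁻¹) = s * (t*y) * s⁻¹ from by group]
      exact ⟨hmem, c.hSn.conj_mem _ hty s⟩
    obtain ⟨a, ha, b, hb, rfl⟩ := c.comp_decomp ⟨1, cj_one.symm⟩ s hs
    have hbt : b * t * b⁻¹ = t := by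
      have h := hcT t htT b hb
      rw [← h]; group
    have e : (a*b) * t * (a*b)⁻¹ = a * (b*t*b⁻¹) * a⁻¹ := by group
    rw [e, hbt] at hαU
    exact havoid a ha hαU
  rcases c.dichot hHS c.hSH with hU1 | hU2 <;> rcases c.dichot hKS c.hSK with hV1 | hV2
  · -- both projections proper: use two distinct conjugates
    obtain ⟨g₀, hg₀⟩ : ∃ g, cj g c.T ≠ c.T := by
      by_contra h
      push_neg at h
      have hN : c.T.Normal := by
        constructor
        intro t ht g
        have h1 : g*t*g⁻¹ ∈ cj g c.T := cj_mem ht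
        rwa [h g] at h1
      exact hTneS (c.hmin c.T hN c.hTbot c.hTS)
    have hcP' : ∀ a ∈ cj g₀ c.T, ∀ b ∈ compl' c.T (cj g₀ c.T), a * b = b * a :=
      c.comp_central ⟨g₀, rfl⟩
    obtain ⟨k₀, hk₀, hgk⟩ := c.reach hKS g₀
    have hV1' : projS (cj g₀ c.T) (compl' c.T (cj g₀ c.T)) (c.K ⊓ c.S) hcP' ≠ cj g₀ c.T := by
      intro hfull
      apply hV1
      have hPeq : cj k₀ c.T = cj g₀ c.T := hgk.symm
      have hBeq : cj k₀ (compl' c.T c.T) = compl' c.T (cj g₀ c.T) := by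
        rw [c.comp_cj k₀ c.T, hPeq]
      have hcmid : ∀ a ∈ cj k₀ c.T, ∀ b ∈ cj k₀ (compl' c.T c.T), a * b = b * a := by
        rw [hPeq, hBeq]; exact hcP'
      have h1 : cj k₀ (projS c.T (compl' c.T c.T) (c.K ⊓ c.S) hcT)
          = projS (cj k₀ c.T) (cj k₀ (compl' c.T c.T)) (cj k₀ (c.K ⊓ c.S)) hcmid :=
        projS_cj hcT k₀ hcmid
      have h2 : projS (cj k₀ c.T) (cj k₀ (compl' c.T c.T)) (cj k₀ (c.K ⊓ c.S)) hcmid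
          = projS (cj g₀ c.T) (compl' c.T (cj g₀ c.T)) (c.K ⊓ c.S) hcP' :=
        projS_congr hPeq hBeq (cj_inf_self hk₀)
      rw [h2, hfull, ← hPeq] at h1
      exact cj_inj h1
    obtain ⟨tU, htUT, htUne, havoidU⟩ :=
      exists_avoid_sub c.T (projS c.T (compl' c.T c.T) (c.H ⊓ c.S) hcT) projS_le hU1
    obtain ⟨tV, htVT, htVne, havoidV⟩ :=
      exists_avoid_sub (cj g₀ c.T)
        (projS (cj g₀ c.T) (compl' c.T (cj g₀ c.T)) (c.K ⊓ c.S) hcP') projS_le hV1'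
    have htVB : tV ∈ compl' c.T c.T := Subgroup.subset_closure ⟨g₀, hg₀, htVT⟩
    have htUB' : tU ∈ compl' c.T (cj g₀ c.T) := by
      apply Subgroup.subset_closure
      refine ⟨1, ?_, by rw [cj_one]; exact htUT⟩
      rw [cj_one]
      exact hg₀.symm
    rcases c.hcover (tU * tV) with hx | hx
    · exact hbasekill c.H tU htUT havoidU tV htVB (conj_reduce hHS hx)
    · obtain ⟨s, hs, hmem⟩ := conj_reduce hKS hx
      have hcomm : tU * tV = tV * tU := hcT tU htUT tV htVB
      rw [hcomm] at hmem
      have hβ : s*tV*s⁻¹ ∈ cj g₀ c.T := (c.stab_cjT g₀).2 s hs tV htVT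
      have hα : s*tU*s⁻¹ ∈ compl' c.T (cj g₀ c.T) :=
        (c.comp_stab ⟨g₀, rfl⟩).2 s hs tU htUB'
      have htv : tV * tU ∈ c.S :=
        c.S.mul_mem ((c.stab_cjT g₀).1 htVT) (c.hTS htUT)
      have hβV : s*tV*s⁻¹ ∈ projS (cj g₀ c.T) (compl' c.T (cj g₀ c.T)) (c.K ⊓ c.S) hcP' := by
        refine ⟨hβ, s*tU*s⁻¹, hα, ?_⟩
        rw [show (s*tV*s⁻¹) * (s*tU*s⁻¹) = s * (tV*tU) * s⁻¹ from by group]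
        exact ⟨hmem, c.hSn.conj_mem _ htv s⟩
      obtain ⟨a, ha, b, hb, rfl⟩ := c.comp_decomp ⟨g₀, rfl⟩ s hs
      have hbt : b * tV * b⁻¹ = tV := by
        have h := hcP' tV htVT b hb
        rw [← h]; group
      have e : (a*b) * tV * (a*b)⁻¹ = a * (b*tV*b⁻¹) * a⁻¹ := by group
      rw [e, hbt] at hβV
      exact havoidV a ha hβV
  · -- U proper, V trivial intersections
    obtain ⟨tU, htUT, htUne, havoidU⟩ :=
      exists_avoid_sub c.T (projS c.T (compl' c.T c.T) (c.H ⊓ c.S) hcT) projS_le hU1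
    rcases c.hcover tU with hx | hx
    · apply hbasekill c.H tU htUT havoidU 1 (Subgroup.one_mem _)
      obtain ⟨s, hs, hmem⟩ := conj_reduce hHS hx
      exact ⟨s, hs, by rwa [mul_one]⟩
    · exact htUne (hkill c.K hV2 tU htUT (conj_reduce hKS hx))
  · -- V proper at base, U trivial intersections
    obtain ⟨tV, htVT, htVne, havoidV⟩ :=
      exists_avoid_sub c.T (projS c.T (compl' c.T c.T) (c.K ⊓ c.S) hcT) projS_le hV1
    rcases c.hcover tV with hx | hx
    · exact htVne (hkill c.H hU2 tV htVT (conj_reduce hHS hx))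
    · apply hbasekill c.K tV htVT havoidV 1 (Subgroup.one_mem _)
      obtain ⟨s, hs, hmem⟩ := conj_reduce hKS hx
      exact ⟨s, hs, by rwa [mul_one]⟩
  · -- both trivial
    obtain ⟨t, htT, htne⟩ : ∃ t ∈ c.T, t ≠ 1 := by
      by_contra h
      push_neg at h
      exact c.hTbot ((Subgroup.eq_bot_iff_forall _).mpr h)
    rcases c.hcover t with hx | hx
    · exact htne (hkill c.H hU2 t htT (conj_reduce hHS hx))
    · exact htne (hkill c.K hV2 t htT (conj_reduce hKS hx))

end Ctx

lemma coreB [Finite G] (H K S : Subgroup G) (hH : IsCoatom H) (hK : IsCoatom K)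
    (hcover : ∀ g : G, (∃ x : G, x * g * x⁻¹ ∈ H) ∨ (∃ x : G, x * g * x⁻¹ ∈ K))
    [hSn : S.Normal] (hSbot : S ≠ ⊥)
    (hmin : ∀ W : Subgroup G, W.Normal → W ≠ ⊥ → W ≤ S → W = S)
    (hSH : ¬ S ≤ H) (hSK : ¬ S ≤ K)
    (hnab : ¬ ∀ a ∈ S, ∀ b ∈ S, a * b = b * a)
    (W : Subgroup G) (hWS : W ≤ S) (hWst : ∀ s ∈ S, ∀ w ∈ W, s * w * s⁻¹ ∈ W)
    (hWbot : W ≠ ⊥) : S ≤ W := by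
  obtain ⟨T, ⟨hT1, hT2, hT3, hT4⟩, hTmin⟩ := exists_minimal_subgroup
      {V : Subgroup G | V ≠ ⊥ ∧ V ≤ W ∧ V ≤ S ∧ ∀ s ∈ S, ∀ v ∈ V, s * v * s⁻¹ ∈ V}
      ⟨W, hWbot, le_refl W, hWS, hWst⟩
  have hTS : T = S := Ctx.coreB_T
    { H := H, K := K, S := S, T := T, hH := hH, hK := hK, hcover := hcover,
      hSn := hSn, hSbot := hSbot, hmin := hmin, hSH := hSH, hSK := hSK, hnab := hnab,
      hTbot := hT1, hTS := hT3, hTst := hT4,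
      hTmin := fun V hne hleS hst hleT => hTmin V ⟨hne, hleT.trans hT2, hleS, hst⟩ hleT }
  rw [← hTS]
  exact hT2

end NormCov


/-- If `γ(G) = 2` but `γ(G/N) > 2` for every non-trivial normal subgroup `N`, and `G` is
covered by the conjugates of two maximal subgroups `H` and `K`, then either one of `H`, `K`
contains `soc(G)`, or `G` is almost simple. -/
theorem socle_le_or_almost_simple (G : Type*) [Group G] [Finite G]
    (h2 : normalCoveringNumber G = 2)
    (hq : ∀ (N : Subgroup G) [N.Normal], N ≠ ⊥ → 2 < normalCoveringNumber (G ⧸ N))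
    (H K : Subgroup G) (hH : IsCoatom H) (hK : IsCoatom K)
    (hcover : ∀ g : G, (∃ x : G, x * g * x⁻¹ ∈ H) ∨ (∃ x : G, x * g * x⁻¹ ∈ K)) :
    socle G ≤ H ∨ socle G ≤ K ∨ IsAlmostSimpleGroup G := by
  by_cases hsocH : socle G ≤ H
  · exact Or.inl hsocH
  by_cases hsocK : socle G ≤ K
  · exact Or.inr (Or.inl hsocK)
  right; right
  obtain ⟨N, hNmin, hNH⟩ : ∃ N, IsMinimalNormal N ∧ ¬ N ≤ H := by
    by_contra h
    push_neg at h
    exact hsocH (sSup_le fun N hN => h N hN)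
  obtain ⟨M, hMmin, hMK⟩ : ∃ M, IsMinimalNormal M ∧ ¬ M ≤ K := by
    by_contra h
    push_neg at h
    exact hsocK (sSup_le fun N hN => h N hN)
  have hL1 : ∀ W : Subgroup G, W.Normal → W ≠ ⊥ → ¬ (W ≤ H ∧ W ≤ K) := by
    rintro W hWn hWbot ⟨hWH, hWK⟩
    haveI := hWn
    have hle := NormCov.quot_cover_le_two W H K hH.1 hK.1 hWH hWK hcover
    exact absurd (hq W hWbot) (not_lt.mpr hle)
  obtain ⟨S, hSmin, hSH, hSK⟩ : ∃ S, IsMinimalNormal S ∧ ¬ S ≤ H ∧ ¬ S ≤ K := by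
    by_cases hNK : N ≤ K
    · by_cases hMH : M ≤ H
      · exfalso
        obtain ⟨hNn, hNbot, hNm⟩ := hNmin
        obtain ⟨hMn, hMbot, hMm⟩ := hMmin
        haveI := hNn; haveI := hMn
        have hNH_inf : H ⊓ N ≠ N := fun h => hNH (inf_eq_right.mp h)
        obtain ⟨n₀, hn₀N, hn₀ne, hn₀⟩ :=
          NormCov.exists_avoid_sub N (H ⊓ N) inf_le_right hNH_inf
        have hMK_inf : K ⊓ M ≠ M := fun h => hMK (inf_eq_right.mp h)
        obtain ⟨m₀, hm₀M, hm₀ne, hm₀⟩ :=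
          NormCov.exists_avoid_sub M (K ⊓ M) inf_le_right hMK_inf
        have hHN : H ⊔ N = ⊤ := NormCov.coatom_sup hH hNH
        have hKM : K ⊔ M = ⊤ := NormCov.coatom_sup hK hMK
        rcases hcover (n₀ * m₀) with ⟨x, hx⟩ | ⟨x, hx⟩
        · have hm : x * m₀ * x⁻¹ ∈ H := hMH (hMn.conj_mem m₀ hm₀M x)
          have hn : x * n₀ * x⁻¹ ∈ H := by
            have e : x * n₀ * x⁻¹ = (x * (n₀*m₀) * x⁻¹) * (x * m₀ * x⁻¹)⁻¹ := by group
            rw [e]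
            exact H.mul_mem hx (H.inv_mem hm)
          obtain ⟨s, hs, hsn⟩ := NormCov.conj_reduce hHN ⟨x, hn⟩
          exact hn₀ s hs ⟨hsn, N.mul_mem (N.mul_mem hs hn₀N) (N.inv_mem hs)⟩
        · have hn : x * n₀ * x⁻¹ ∈ K := hNK (hNn.conj_mem n₀ hn₀N x)
          have hm : x * m₀ * x⁻¹ ∈ K := by
            have e : x * m₀ * x⁻¹ = (x * n₀ * x⁻¹)⁻¹ * (x * (n₀*m₀) * x⁻¹) := by group
            rw [e]
            exact K.mul_mem (K.inv_mem hn) hx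
          obtain ⟨s, hs, hsm⟩ := NormCov.conj_reduce hKM ⟨x, hm⟩
          exact hm₀ s hs ⟨hsm, M.mul_mem (M.mul_mem hs hm₀M) (M.inv_mem hs)⟩
      · exact ⟨M, hMmin, hMH, hMK⟩
    · exact ⟨N, hNmin, hNH, hNK⟩
  obtain ⟨hSn, hSbot, hmin⟩ := hSmin
  haveI := hSn
  have hHS : H ⊔ S = ⊤ := NormCov.coatom_sup hH hSH
  have hKS : K ⊔ S = ⊤ := NormCov.coatom_sup hK hSK
  -- `S` is non-abelian
  have hnab : ¬ ∀ a ∈ S, ∀ b ∈ S, a * b = b * a := by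
    intro hab
    have hbot : ∀ L : Subgroup G, L ⊔ S = ⊤ → ¬ S ≤ L → L ⊓ S = ⊥ := by
      intro L hLS hSL
      have hnorm : (L ⊓ S).Normal := by
        constructor
        intro w hw g
        obtain ⟨l, hl, s, hs, rfl⟩ := NormCov.decomp hLS g
        have hsw : s * w * s⁻¹ = w := by
          have h := hab s hs w hw.2
          calc s*w*s⁻¹ = (s*w)*s⁻¹ := by group
            _ = (w*s)*s⁻¹ := by rw [h]
            _ = w := by group
        have e : (l*s) * w * (l*s)⁻¹ = l * (s*w*s⁻¹) * l⁻¹ := by group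
        rw [e, hsw]
        exact ⟨L.mul_mem (L.mul_mem hl hw.1) (L.inv_mem hl), hSn.conj_mem w hw.2 l⟩
      by_contra hne
      exact hSL (by rw [← hmin (L ⊓ S) hnorm hne inf_le_right]; exact inf_le_left)
    obtain ⟨a, haS, hane⟩ : ∃ a ∈ S, a ≠ 1 := by
      by_contra h
      push_neg at h
      exact hSbot ((Subgroup.eq_bot_iff_forall _).mpr h)
    have hkill : ∀ L : Subgroup G, L ⊓ S = ⊥ → (∃ x : G, x * a * x⁻¹ ∈ L) → False := by
      rintro L hLbot ⟨x, hx⟩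
      have h1 : x * a * x⁻¹ ∈ L ⊓ S := ⟨hx, hSn.conj_mem a haS x⟩
      rw [hLbot, Subgroup.mem_bot] at h1
      apply hane
      calc a = x⁻¹ * (x*a*x⁻¹) * x := by group
        _ = 1 := by rw [h1]; group
    rcases hcover a with hx | hx
    · exact hkill H (hbot H hHS hSH) hx
    · exact hkill K (hbot K hKS hSK) hx
  -- the centralizer of `S` is trivial
  have hCbot : Subgroup.centralizer (S : Set G) = ⊥ := by
    by_contra hC
    have hCn : (Subgroup.centralizer (S : Set G)).Normal := NormCov.centralizer_normal S
    by_cases h1 : Subgroup.centralizer (S : Set G) ≤ K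
    · by_cases h2 : Subgroup.centralizer (S : Set G) ≤ H
      · exact hL1 _ hCn hC ⟨h2, h1⟩
      · exact NormCov.coreA K H S (Subgroup.centralizer (S : Set G)) hK hH
          (fun g => (hcover g).symm) hSbot hmin hSK hSH le_rfl h2
    · exact NormCov.coreA H K S (Subgroup.centralizer (S : Set G)) hH hK hcover
        hSbot hmin hSH hSK le_rfl h1
  -- `S` is simple
  have hsimple : IsSimpleGroup ↥S := by
    haveI : Nontrivial ↥S := (Subgroup.nontrivial_iff_ne_bot S).mpr hSbot
    constructor
    intro N hNnorm
    by_cases hNbot : N = ⊥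
    · exact Or.inl hNbot
    right
    have hWS : N.map S.subtype ≤ S := by
      rintro x ⟨y, hy, rfl⟩
      exact y.2
    have hWst : ∀ s ∈ S, ∀ w ∈ N.map S.subtype, s * w * s⁻¹ ∈ N.map S.subtype := by
      rintro s hs w ⟨y, hy, rfl⟩
      exact ⟨⟨s, hs⟩ * y * ⟨s, hs⟩⁻¹, hNnorm.conj_mem y hy ⟨s, hs⟩, rfl⟩
    have hWbot : N.map S.subtype ≠ ⊥ := by
      intro h
      apply hNbot
      rw [eq_bot_iff]
      intro y hy
      have hmem : (y : G) ∈ N.map S.subtype := ⟨y, hy, rfl⟩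
      rw [h, Subgroup.mem_bot] at hmem
      simpa [Subgroup.mem_bot] using Subtype.ext hmem
    have hSle := NormCov.coreB H K S hH hK hcover hSbot hmin hSH hSK hnab
      (N.map S.subtype) hWS hWst hWbot
    rw [eq_top_iff]
    rintro y -
    obtain ⟨z, hz, hzy⟩ := hSle y.2
    have hzy' : z = y := Subtype.ext hzy
    rwa [← hzy']
  exact ⟨S, hSn, hsimple,
    fun hf => hnab fun a ha b hb => congrArg Subtype.val (hf ⟨a, ha⟩ ⟨b, hb⟩), hCbot⟩
end

section
/- Let H be a proper subgroup of a finite group G and let N be a normal subgroup of G such that HN = G. Then the union over all g ∈ G of the conjugates (H ∩ N)^g is a proper subset of N. -/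
open scoped Pointwise

open MulAction in
lemma aux_exists_not_conj_mem {G : Type*} [Group G] [Finite G] (K : Subgroup G)
    (hK : K ≠ ⊤) : ∃ y : G, ∀ x : G, x⁻¹ * y * x ∉ K := by
  classical
  have : Fintype G := Fintype.ofFinite G
  have : Fintype (G ⧸ K) := Fintype.ofFinite _
  have hsub : Subsingleton (orbitRel.Quotient G (G ⧸ K)) :=
    (pretransitive_iff_subsingleton_quotient G (G ⧸ K)).mp inferInstance
  have : Fintype (orbitRel.Quotient G (G ⧸ K)) := Fintype.ofFinite _
  have hΩ : Fintype.card (orbitRel.Quotient G (G ⧸ K)) = 1 := by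
    have : Nonempty (orbitRel.Quotient G (G ⧸ K)) :=
      ⟨Quotient.mk _ ((1 : G) : G ⧸ K)⟩
    exact Fintype.card_eq_one_iff.mpr ⟨Classical.arbitrary _, fun b => Subsingleton.elim _ _⟩
  have hburn := sum_card_fixedBy_eq_card_orbits_mul_card_group G (G ⧸ K)
  rw [hΩ, one_mul] at hburn
  -- card (G ⧸ K) ≥ 2
  have hidx : 2 ≤ Fintype.card (G ⧸ K) := by
    have h1 : K.index ≠ 1 := by
      simpa [Subgroup.index_eq_one] using hK
    have h0 : K.index ≠ 0 := Subgroup.index_ne_zero_of_finite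
    have : K.index = Fintype.card (G ⧸ K) := by
      rw [Subgroup.index, Nat.card_eq_fintype_card]
    omega
  by_contra hcon
  push_neg at hcon
  have hne : ∀ g : G, (fixedBy (G ⧸ K) g).Nonempty := by
    intro g
    obtain ⟨x, hx⟩ := hcon g⁻¹
    refine ⟨(x : G ⧸ K), ?_⟩
    show g • (x : G ⧸ K) = x
    have h2 : g • (x : G ⧸ K) = ((g * x : G) : G ⧸ K) := rfl
    rw [h2]
    exact (QuotientGroup.eq).mpr (by simpa [mul_assoc] using hx)
  have hpos : ∀ g : G, 1 ≤ Fintype.card (fixedBy (G ⧸ K) g) := fun g =>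
    Fintype.card_pos_iff.mpr (hne g).to_subtype
  have h1fix : Fintype.card (fixedBy (G ⧸ K) (1 : G)) = Fintype.card (G ⧸ K) := by
    apply Fintype.card_congr
    apply Equiv.subtypeUnivEquiv
    intro x; exact one_smul _ _
  have hbound : Fintype.card (G ⧸ K) + (Fintype.card G - 1) ≤ Fintype.card G := by
    calc Fintype.card (G ⧸ K) + (Fintype.card G - 1)
        = Fintype.card (fixedBy (G ⧸ K) (1 : G)) + ∑ g ∈ Finset.univ.erase (1 : G), 1 := by
          rw [h1fix, Finset.sum_const, smul_eq_mul, mul_one, Finset.card_erase_of_mem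
            (Finset.mem_univ _), Finset.card_univ]
      _ ≤ Fintype.card (fixedBy (G ⧸ K) (1 : G)) +
          ∑ g ∈ Finset.univ.erase (1 : G), Fintype.card (fixedBy (G ⧸ K) g) := by
          gcongr with g hg; exact hpos g
      _ = ∑ g : G, Fintype.card (fixedBy (G ⧸ K) g) := by
          rw [← Finset.sum_erase_add _ _ (Finset.mem_univ (1 : G))]; ring
      _ = Fintype.card G := hburn
  have : 1 ≤ Fintype.card G := Fintype.card_pos
  omega

/-- If `H` is a proper subgroup of a finite group `G` and `N ⊴ G` with `HN = G`, then
the union of the conjugates of `H ∩ N` is a proper subset of `N`. -/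
theorem union_conj_inf_ssubset (G : Type*) [Group G] [Finite G]
    (H N : Subgroup G) (hH : H ≠ ⊤) (hN : N.Normal)
    (hHN : (H : Set G) * (N : Set G) = Set.univ) :
    (⋃ g : G, (fun x => g⁻¹ * x * g) '' ((H ⊓ N : Subgroup G) : Set G)) ⊂ (N : Set G) := by

  have hsub : (⋃ g : G, (fun x => g⁻¹ * x * g) '' ((H ⊓ N : Subgroup G) : Set G)) ⊆ N := by
    rintro x hx
    simp only [Set.mem_iUnion, Set.mem_image] at hx
    obtain ⟨g, k, hk, rfl⟩ := hx
    simpa using hN.conj_mem k hk.2 g⁻¹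
  set K' : Subgroup N := (H ⊓ N).subgroupOf N with hK'def
  have hK' : K' ≠ ⊤ := by
    intro htop
    have hNle : N ≤ H := fun x hx => by
      have := (Subgroup.subgroupOf_eq_top.mp htop) hx
      exact this.1
    apply hH
    rw [eq_top_iff]
    intro g _
    have : g ∈ (H : Set G) * (N : Set G) := by rw [hHN]; trivial
    obtain ⟨h, hh, n, hn, rfl⟩ := this
    exact H.mul_mem hh (hNle hn)
  obtain ⟨y, hy⟩ := aux_exists_not_conj_mem K' hK'
  refine ⟨hsub, fun hc => ?_⟩
  have hyU : (y : G) ∈ ⋃ g : G, (fun x => g⁻¹ * x * g) '' ((H ⊓ N : Subgroup G) : Set G) :=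
    hc y.2
  simp only [Set.mem_iUnion, Set.mem_image] at hyU
  obtain ⟨g, k, hk, hyk⟩ := hyU
  have : g ∈ (H : Set G) * (N : Set G) := by rw [hHN]; trivial
  obtain ⟨h, hh, n, hn, rfl⟩ := this
  have hk' : h⁻¹ * k * h ∈ H ⊓ N :=
    ⟨H.mul_mem (H.mul_mem (H.inv_mem hh) hk.1) hh,
     by simpa using hN.conj_mem k hk.2 h⁻¹⟩
  set nN : N := ⟨n, hn⟩
  set kN : N := ⟨h⁻¹ * k * h, hk'.2⟩
  have hyeq : y = nN⁻¹ * kN * nN := by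
    apply Subtype.ext
    push_cast
    rw [← hyk]
    show (h * n)⁻¹ * k * (h * n) = n⁻¹ * (h⁻¹ * k * h) * n
    group
  apply hy nN⁻¹
  have : (nN⁻¹)⁻¹ * y * nN⁻¹ = kN := by rw [hyeq]; group
  rw [this]
  exact Subgroup.mem_subgroupOf.mpr hk'
end

section
/- Let H be a proper subgroup of a finite group G and let N₁, N₂ be two distinct minimal normal subgroups of G. If HN₁ = HN₂ = G, then H ∩ N₁ = H ∩ N₂ = 1. -/
open scoped Pointwise

open scoped Pointwise

lemma my_aux {G : Type*} [Group G] (H N₁ N₂ : Subgroup G) (hH : H ≠ ⊤)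
    (hN₁ : N₁.Normal) (hN₂ : N₂.Normal)
    (hN₁min : ∀ M : Subgroup G, M.Normal → M ≠ ⊥ → M ≤ N₁ → M = N₁)
    (hdisj : Disjoint N₁ N₂)
    (h1 : (H : Set G) * (N₁ : Set G) = Set.univ)
    (h2 : (H : Set G) * (N₂ : Set G) = Set.univ) : H ⊓ N₁ = ⊥ := by
  have hcomm := Subgroup.commute_of_normal_of_disjoint N₁ N₂ hN₁ hN₂ hdisj
  have hKnormal : (H ⊓ N₁).Normal := by
    constructor
    intro k hk g
    obtain ⟨h, hh, n, hn, rfl⟩ : ∃ h ∈ H, ∃ n ∈ N₂, h * n = g := by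
      have : g ∈ (H : Set G) * (N₂ : Set G) := h2 ▸ Set.mem_univ g
      simpa [Set.mem_mul] using this
    have hkN₁ : k ∈ N₁ := hk.2
    have : h * n * k * (h * n)⁻¹ = h * k * h⁻¹ := by
      have := hcomm k n hkN₁ hn
      group
      rw [mul_assoc h, ← this.eq]
      group
    rw [this]
    exact ⟨H.mul_mem (H.mul_mem hh hk.1) (H.inv_mem hh), hN₁.conj_mem k hkN₁ h⟩
  by_contra hbot
  have := hN₁min (H ⊓ N₁) hKnormal hbot inf_le_right
  have hle : N₁ ≤ H := this ▸ inf_le_left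
  apply hH
  rw [eq_top_iff]
  intro g _
  have : g ∈ (H : Set G) * (N₁ : Set G) := h1 ▸ Set.mem_univ g
  obtain ⟨h, hh, n, hn, rfl⟩ := this
  exact H.mul_mem hh (hle hn)

/-- If `H` is a proper subgroup of a finite group `G`, and `N₁ ≠ N₂` are minimal normal
subgroups of `G` with `HN₁ = HN₂ = G`, then `H ∩ N₁ = H ∩ N₂ = 1`. -/
theorem inf_eq_bot_of_two_minimal_normal (G : Type*) [Group G] [Finite G]
    (H N₁ N₂ : Subgroup G) (hH : H ≠ ⊤)
    (hN₁ : N₁.Normal) (hN₁bot : N₁ ≠ ⊥)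
    (hN₁min : ∀ M : Subgroup G, M.Normal → M ≠ ⊥ → M ≤ N₁ → M = N₁)
    (hN₂ : N₂.Normal) (hN₂bot : N₂ ≠ ⊥)
    (hN₂min : ∀ M : Subgroup G, M.Normal → M ≠ ⊥ → M ≤ N₂ → M = N₂)
    (hne : N₁ ≠ N₂)
    (h1 : (H : Set G) * (N₁ : Set G) = Set.univ)
    (h2 : (H : Set G) * (N₂ : Set G) = Set.univ) :
    H ⊓ N₁ = ⊥ ∧ H ⊓ N₂ = ⊥ := by
  have hdisj : Disjoint N₁ N₂ := by
    rw [disjoint_iff]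
    by_contra hbot
    have e1 := hN₁min (N₁ ⊓ N₂) inferInstance hbot inf_le_left
    have e2 := hN₂min (N₁ ⊓ N₂) inferInstance hbot inf_le_right
    exact hne (e1 ▸ e2)
  exact ⟨my_aux H N₁ N₂ hH hN₁ hN₂ hN₁min hdisj h1 h2,
    my_aux H N₂ N₁ hH hN₂ hN₁ hN₂min hdisj.symm h2 h1⟩
end

section
/- Let G be a finite group with γ(G) = 2 such that γ(G/N) > 2 for every non-trivial normal subgroup N of G, let M = soc(G), and suppose M is abelian. Then G is a semidirect product M ⋊ K for a maximal subgroup K acting on M, M is an irreducible K-module, and K is an almost-transitive irreducible subgroup of Aut(M). -/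
open scoped Pointwise

section Helpers
variable {G : Type*} [Group G]

private lemma conj_eq_one {x a : G} (h : x * a * x⁻¹ = 1) : a = 1 := by
  have h1 : x * a = x := by rwa [mul_inv_eq_one] at h
  rwa [mul_eq_left] at h1

private lemma conj_mem_cancel {H : Subgroup G} {u z : G} (hu : u ∈ H)
    (h : u * z * u⁻¹ ∈ H) : z ∈ H := by
  have h2 := H.mul_mem (H.mul_mem (H.inv_mem hu) h) hu
  have e : u⁻¹ * (u * z * u⁻¹) * u = z := by group
  rwa [e] at h2

private lemma le_normalizer_of_conj {A X : Subgroup G}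
    (h : ∀ a ∈ A, ∀ x ∈ X, a * x * a⁻¹ ∈ X) : A ≤ Subgroup.normalizer (X : Set G) := by
  intro a ha
  rw [Subgroup.mem_normalizer_iff]
  intro x
  constructor
  · exact fun hx => h a ha x hx
  · intro hx
    have h2 := h a⁻¹ (A.inv_mem ha) _ hx
    have e : a⁻¹ * (a * x * a⁻¹) * a⁻¹⁻¹ = x := by group
    rwa [e] at h2

private lemma normal_of_sup {A B : Subgroup G} (X : Subgroup G)
    (hsup : A ⊔ B = ⊤) (hA : A ≤ Subgroup.normalizer (X : Set G)) (hB : B ≤ Subgroup.normalizer (X : Set G)) : X.Normal := by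
  rw [← Subgroup.normalizer_eq_top_iff, eq_top_iff, ← hsup]
  exact sup_le hA hB

private lemma exists_minimal_normal_le [Finite G] (N : Subgroup G)
    (hN : N.Normal) (hNb : N ≠ ⊥) : ∃ A : Subgroup G, IsMinimalNormal A ∧ A ≤ N := by
  haveI : Finite (Subgroup G) := Finite.of_injective _ SetLike.coe_injective
  have hwf : WellFounded ((· < ·) : Subgroup G → Subgroup G → Prop) := IsWellFounded.wf
  obtain ⟨A, hAS, hminS⟩ := hwf.has_min {A : Subgroup G | A.Normal ∧ A ≠ ⊥ ∧ A ≤ N}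
    ⟨N, hN, hNb, le_rfl⟩
  refine ⟨A, ⟨hAS.1, hAS.2.1, ?_⟩, hAS.2.2⟩
  intro B hBn hBb hBA
  by_contra hne
  exact hminS B ⟨hBn, hBb, hBA.trans hAS.2.2⟩ (lt_of_le_of_ne hBA hne)



end Helpers

private lemma main_aux {G : Type*} [Group G] [Finite G]
    (M U W : Subgroup G) (hMn : M.Normal)
    (hab : ∀ a b : G, a ∈ M → b ∈ M → a * b = b * a)
    (hsocle : ∀ A : Subgroup G, IsMinimalNormal A → A ≤ M)
    (hMs : ∀ X : Subgroup G, (∀ A : Subgroup G, IsMinimalNormal A → A ≤ X) → M ≤ X)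
    (hU : IsCoatom U) (hW : IsCoatom W)
    (hcov : ∀ g : G, ∃ x : G, x * g * x⁻¹ ∈ U ∨ x * g * x⁻¹ ∈ W)
    (hstep : ∀ N : Subgroup G, N.Normal → N ≠ ⊥ → U ⊔ N = ⊤ ∨ W ⊔ N = ⊤)
    (hUM : U ⊔ M = ⊤) :
    ∃ K : Subgroup G, IsCoatom K ∧ M ⊓ K = ⊥ ∧ M ⊔ K = ⊤ ∧
      (∀ k ∈ K, (∀ m ∈ M, k * m = m * k) → k = 1) ∧
      (∀ N : Subgroup G, N ≤ M → (∀ k ∈ K, ∀ n ∈ N, k * n * k⁻¹ ∈ N) → N = ⊥ ∨ N = M) ∧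
      (∃ T : Subgroup G, T ≤ K ∧ T ≠ K ∧
        ∀ k ∈ K, (∃ m ∈ M, m ≠ 1 ∧ k * m = m * k) → ∃ x ∈ K, x * k * x⁻¹ ∈ T) := by
  have hMnotleU : ¬ M ≤ U := fun h => hU.1 (by rwa [sup_eq_left.mpr h] at hUM)
  have hDU : U ⊓ M ≤ U := inf_le_left
  have hDM : U ⊓ M ≤ M := inf_le_right
  have hDnormal : (U ⊓ M).Normal := by
    refine normal_of_sup _ hUM ?_ ?_
    · apply le_normalizer_of_conj
      intro a ha x hx
      obtain ⟨hx1, hx2⟩ := Subgroup.mem_inf.mp hx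
      exact Subgroup.mem_inf.mpr ⟨U.mul_mem (U.mul_mem ha hx1) (U.inv_mem ha),
        hMn.conj_mem x hx2 a⟩
    · apply le_normalizer_of_conj
      intro m hm x hx
      have e : m * x * m⁻¹ = x := by
        rw [hab m x hm (Subgroup.mem_inf.mp hx).2, mul_inv_cancel_right]
      rw [e]; exact hx
  rcases eq_or_ne (U ⊓ M) ⊥ with hDbot | hDbot
  · -- main case : U is a complement to M
    have hminW : ∀ A : Subgroup G, IsMinimalNormal A → A ≤ W := by
      intro A hA
      by_contra hAW
      have hAM : A ≤ M := hsocle A hA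
      have hWA : W ⊔ A = ⊤ := by
        rcases (le_sup_left : W ≤ W ⊔ A).lt_or_eq with h | h
        · exact hW.2 _ h
        · exact absurd (le_sup_right.trans h.ge) hAW
      have hWAn : (W ⊓ A).Normal := by
        refine normal_of_sup _ hWA ?_ ?_
        · apply le_normalizer_of_conj
          intro a ha x hx
          obtain ⟨hx1, hx2⟩ := Subgroup.mem_inf.mp hx
          exact Subgroup.mem_inf.mpr ⟨W.mul_mem (W.mul_mem ha hx1) (W.inv_mem ha),
            hA.1.conj_mem x hx2 a⟩
        · apply le_normalizer_of_conj
          intro a ha x hx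
          have e : a * x * a⁻¹ = x := by
            rw [hab a x (hAM ha) (hAM (Subgroup.mem_inf.mp hx).2), mul_inv_cancel_right]
          rw [e]; exact hx
      have hWAbot : W ⊓ A = ⊥ := by
        by_contra hne
        have h2 := hA.2.2 (W ⊓ A) hWAn hne inf_le_right
        exact hAW (h2.ge.trans inf_le_left)
      obtain ⟨⟨a, haA⟩, hane⟩ := Subgroup.ne_bot_iff_exists_ne_one.mp hA.2.1
      have ha1 : a ≠ 1 := by simpa [Subtype.ext_iff] using hane
      obtain ⟨x, hx | hx⟩ := hcov a
      · have h1 : x * a * x⁻¹ ∈ U ⊓ M :=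
          Subgroup.mem_inf.mpr ⟨hx, hAM (hA.1.conj_mem a haA x)⟩
        rw [hDbot, Subgroup.mem_bot] at h1
        exact ha1 (conj_eq_one h1)
      · have h1 : x * a * x⁻¹ ∈ W ⊓ A :=
          Subgroup.mem_inf.mpr ⟨hx, hA.1.conj_mem a haA x⟩
        rw [hWAbot, Subgroup.mem_bot] at h1
        exact ha1 (conj_eq_one h1)
    have hMW : M ≤ W := hMs W hminW
    refine ⟨U, hU, (inf_comm M U).trans hDbot, (sup_comm M U).trans hUM, ?_, ?_, ?_⟩
    · -- faithfulness
      intro k hk hcomm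
      have hCn : (U ⊓ Subgroup.centralizer (M : Set G)).Normal := by
        refine normal_of_sup _ hUM ?_ ?_
        · apply le_normalizer_of_conj
          intro a ha x hx
          obtain ⟨hx1, hx2⟩ := Subgroup.mem_inf.mp hx
          refine Subgroup.mem_inf.mpr ⟨U.mul_mem (U.mul_mem ha hx1) (U.inv_mem ha), ?_⟩
          rw [Subgroup.mem_centralizer_iff]
          intro m hm
          have hm' : a⁻¹ * m * a ∈ M := by
            have := hMn.conj_mem m hm a⁻¹
            rwa [inv_inv] at this
          have key : x * (a⁻¹ * m * a) = (a⁻¹ * m * a) * x :=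
            (Subgroup.mem_centralizer_iff.mp hx2 _ hm').symm
          have goal' : a⁻¹ * (m * (a * x * a⁻¹)) * a = a⁻¹ * ((a * x * a⁻¹) * m) * a := by
            calc a⁻¹ * (m * (a * x * a⁻¹)) * a = (a⁻¹ * m * a) * x := by group
            _ = x * (a⁻¹ * m * a) := key.symm
            _ = a⁻¹ * ((a * x * a⁻¹) * m) * a := by group
          exact mul_left_cancel (mul_right_cancel goal')
        · apply le_normalizer_of_conj
          intro m hm x hx
          obtain ⟨hx1, hx2⟩ := Subgroup.mem_inf.mp hx
          have e : m * x * m⁻¹ = x := by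
            rw [Subgroup.mem_centralizer_iff.mp hx2 m hm, mul_inv_cancel_right]
          rw [e]; exact hx
      have hCbot : U ⊓ Subgroup.centralizer (M : Set G) = ⊥ := by
        by_contra hne
        obtain ⟨A, hA, hAC⟩ := exists_minimal_normal_le _ hCn hne
        have h2 : A ≤ U ⊓ M := le_inf (hAC.trans inf_le_left) (hsocle A hA)
        rw [hDbot] at h2
        exact hA.2.1 (le_bot_iff.mp h2)
      have hkC : k ∈ U ⊓ Subgroup.centralizer (M : Set G) :=
        Subgroup.mem_inf.mpr ⟨hk,
          Subgroup.mem_centralizer_iff.mpr (fun m hm => (hcomm m hm).symm)⟩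
      rw [hCbot, Subgroup.mem_bot] at hkC
      exact hkC
    · -- irreducibility
      intro N hNM hNinv
      rcases eq_or_ne N ⊥ with h | hNbot
      · exact Or.inl h
      right
      have hNn : N.Normal := by
        refine normal_of_sup _ hUM ?_ ?_
        · exact le_normalizer_of_conj hNinv
        · apply le_normalizer_of_conj
          intro m hm x hx
          have e : m * x * m⁻¹ = x := by
            rw [hab m x hm (hNM hx), mul_inv_cancel_right]
          rw [e]; exact hx
      rcases hstep N hNn hNbot with h | h
      · apply le_antisymm hNM
        intro m hm
        haveI := hNn
        have htop : N ⊔ U = ⊤ := by rwa [sup_comm] at h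
        have hmem : m ∈ (↑N : Set G) * ↑U := by
          rw [← Subgroup.normal_mul N U, htop, Subgroup.coe_top]
          trivial
        obtain ⟨n, hn, u, hu, hnu'⟩ := hmem
        have hnu : n * u = m := hnu'
        have huM : u ∈ M := by
          have e : u = n⁻¹ * m := by rw [← hnu]; group
          rw [e]
          exact M.mul_mem (M.inv_mem (hNM hn)) hm
        have h2 : u ∈ U ⊓ M := Subgroup.mem_inf.mpr ⟨hu, huM⟩
        rw [hDbot, Subgroup.mem_bot] at h2
        rw [h2, mul_one] at hnu
        rw [← hnu]
        exact hn
      · exfalso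
        rw [sup_eq_left.mpr (hNM.trans hMW)] at h
        exact hW.1 h
    · -- almost transitivity
      refine ⟨U ⊓ W, inf_le_left, ?_, ?_⟩
      · intro hTK
        have hUW : U ≤ W := by rw [← hTK]; exact inf_le_right
        have h2 : (⊤ : Subgroup G) ≤ W := hUM ▸ sup_le hUW hMW
        exact hW.1 (top_le_iff.mp h2)
      · rintro k hk ⟨m, hmM, hm1, hkm⟩
        set φ : ↥M → ↥M := fun m' => ⟨(m' : G)⁻¹ * (k * m' * k⁻¹),
          M.mul_mem (M.inv_mem m'.2) (hMn.conj_mem _ m'.2 k)⟩ with hφdef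
        have h1 : φ ⟨m, hmM⟩ = 1 := by
          apply Subtype.ext
          show m⁻¹ * (k * m * k⁻¹) = ((1 : ↥M) : G)
          rw [hkm, Subgroup.coe_one, mul_inv_cancel_right, inv_mul_cancel]
        have h0 : φ 1 = 1 := by
          apply Subtype.ext
          show ((1 : ↥M) : G)⁻¹ * (k * ((1 : ↥M) : G) * k⁻¹) = ((1 : ↥M) : G)
          simp
        have hninj : ¬ Function.Injective φ := by
          intro hinj
          have h2 := hinj (h1.trans h0.symm)
          exact hm1 (by simpa [Subtype.ext_iff] using h2)
        have hnsurj : ¬ Function.Surjective φ :=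
          fun hs => hninj (Finite.injective_iff_surjective.mpr hs)
        unfold Function.Surjective at hnsurj
        push_neg at hnsurj
        obtain ⟨m₀, hm₀⟩ := hnsurj
        obtain ⟨x, hx⟩ := hcov ((m₀ : G) * k)
        have hxdec : x ∈ (↑U : Set G) * ↑M := by
          rw [← Subgroup.mul_normal U M, hUM, Subgroup.coe_top]
          trivial
        obtain ⟨u', hu', m', hm', hx''⟩ := hxdec
        have hx' : u' * (m' : G) = x := hx''
        have hm₂M : m' * (m₀ : G) * (k * m'⁻¹ * k⁻¹) ∈ M :=
          M.mul_mem (M.mul_mem hm' m₀.2) (hMn.conj_mem _ (M.inv_mem hm') k)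
        have hxeq : x * ((m₀ : G) * k) * x⁻¹
            = u' * ((m' * (m₀ : G) * (k * m'⁻¹ * k⁻¹)) * k) * u'⁻¹ := by
          rw [← hx']; group
        rcases hx with hx | hx
        · exfalso
          rw [hxeq] at hx
          have h3 : (m' * (m₀ : G) * (k * m'⁻¹ * k⁻¹)) * k ∈ U := conj_mem_cancel hu' hx
          have h4 : m' * (m₀ : G) * (k * m'⁻¹ * k⁻¹) ∈ U := by
            have h5 := U.mul_mem h3 (U.inv_mem hk)
            rwa [mul_inv_cancel_right] at h5
          have h5 : m' * (m₀ : G) * (k * m'⁻¹ * k⁻¹) ∈ U ⊓ M :=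
            Subgroup.mem_inf.mpr ⟨h4, hm₂M⟩
          rw [hDbot, Subgroup.mem_bot] at h5
          apply hm₀ ⟨m', hm'⟩
          apply Subtype.ext
          show m'⁻¹ * (k * m' * k⁻¹) = (m₀ : G)
          have h6 : m' * (m₀ : G) = k * m' * k⁻¹ := by
            have h7 := mul_eq_one_iff_eq_inv.mp h5
            rw [h7]; group
          rw [← h6, inv_mul_cancel_left]
        · rw [hxeq] at hx
          refine ⟨u', hu', ?_⟩
          have hsplit : u' * ((m' * (m₀ : G) * (k * m'⁻¹ * k⁻¹)) * k) * u'⁻¹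
              = (u' * (m' * (m₀ : G) * (k * m'⁻¹ * k⁻¹)) * u'⁻¹) * (u' * k * u'⁻¹) := by
            group
          rw [hsplit] at hx
          have hfirst : u' * (m' * (m₀ : G) * (k * m'⁻¹ * k⁻¹)) * u'⁻¹ ∈ W :=
            hMW (hMn.conj_mem _ hm₂M u')
          have hsecond : u' * k * u'⁻¹ ∈ W := by
            have h5 := W.mul_mem (W.inv_mem hfirst) hx
            rwa [inv_mul_cancel_left] at h5
          exact Subgroup.mem_inf.mpr
            ⟨U.mul_mem (U.mul_mem hu' hk) (U.inv_mem hu'), hsecond⟩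
  · -- contradiction case : U ⊓ M ≠ ⊥
    exfalso
    have hWD : W ⊔ (U ⊓ M) = ⊤ := by
      rcases hstep _ hDnormal hDbot with h | h
      · rw [sup_eq_left.mpr hDU] at h
        exact absurd h hU.1
      · exact h
    have hEn : (W ⊓ (U ⊓ M)).Normal := by
      refine normal_of_sup _ hWD ?_ ?_
      · apply le_normalizer_of_conj
        intro a ha x hx
        obtain ⟨hx1, hx2⟩ := Subgroup.mem_inf.mp hx
        exact Subgroup.mem_inf.mpr ⟨W.mul_mem (W.mul_mem ha hx1) (W.inv_mem ha),
          hDnormal.conj_mem x hx2 a⟩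
      · apply le_normalizer_of_conj
        intro d hd x hx
        have e : d * x * d⁻¹ = x := by
          rw [hab d x (hDM hd) (hDM (Subgroup.mem_inf.mp hx).2), mul_inv_cancel_right]
        rw [e]; exact hx
    have hEbot : W ⊓ (U ⊓ M) = ⊥ := by
      by_contra hne
      rcases hstep _ hEn hne with h | h
      · rw [sup_eq_left.mpr (inf_le_right.trans hDU)] at h
        exact hU.1 h
      · rw [sup_eq_left.mpr inf_le_left] at h
        exact hW.1 h
    have hWM : W ⊔ M = ⊤ := by
      have h2 : W ⊔ (U ⊓ M) ≤ W ⊔ M := sup_le_sup_left hDM W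
      rw [hWD] at h2
      exact top_le_iff.mp h2
    have hFn : (W ⊓ M).Normal := by
      refine normal_of_sup _ hWM ?_ ?_
      · apply le_normalizer_of_conj
        intro a ha x hx
        obtain ⟨hx1, hx2⟩ := Subgroup.mem_inf.mp hx
        exact Subgroup.mem_inf.mpr ⟨W.mul_mem (W.mul_mem ha hx1) (W.inv_mem ha),
          hMn.conj_mem x hx2 a⟩
      · apply le_normalizer_of_conj
        intro m hm x hx
        have e : m * x * m⁻¹ = x := by
          rw [hab m x hm (Subgroup.mem_inf.mp hx).2, mul_inv_cancel_right]
        rw [e]; exact hx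
    have hFbot_ne : W ⊓ M ≠ ⊥ := by
      intro hF
      apply hMnotleU
      intro m hm
      haveI := hDnormal
      have hDWtop : (U ⊓ M) ⊔ W = ⊤ := by rwa [sup_comm] at hWD
      have hmem : m ∈ (↑(U ⊓ M) : Set G) * ↑W := by
        rw [← Subgroup.normal_mul (U ⊓ M) W, hDWtop, Subgroup.coe_top]
        trivial
      obtain ⟨d, hd, w, hw, hdw'⟩ := hmem
      have hdw : d * w = m := hdw'
      have hwM : w ∈ M := by
        have e : w = d⁻¹ * m := by rw [← hdw]; group
        rw [e]
        exact M.mul_mem (M.inv_mem (hDM hd)) hm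
      have h2 : w ∈ W ⊓ M := Subgroup.mem_inf.mpr ⟨hw, hwM⟩
      rw [hF, Subgroup.mem_bot] at h2
      rw [h2, mul_one] at hdw
      rw [← hdw]
      exact hDU hd
    obtain ⟨⟨d, hdD⟩, hdne⟩ := Subgroup.ne_bot_iff_exists_ne_one.mp hDbot
    obtain ⟨⟨f, hfF⟩, hfne⟩ := Subgroup.ne_bot_iff_exists_ne_one.mp hFbot_ne
    have hd1 : d ≠ 1 := by simpa [Subtype.ext_iff] using hdne
    have hf1 : f ≠ 1 := by simpa [Subtype.ext_iff] using hfne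
    have hsplit : ∀ x : G, x * (d * f) * x⁻¹ = (x * d * x⁻¹) * (x * f * x⁻¹) := by
      intro x; group
    obtain ⟨x, hx | hx⟩ := hcov (d * f)
    · rw [hsplit x] at hx
      have hxd : x * d * x⁻¹ ∈ U ⊓ M := hDnormal.conj_mem d hdD x
      have hxfU : x * f * x⁻¹ ∈ U := by
        have h2 := U.mul_mem (U.inv_mem (hDU hxd)) hx
        rwa [inv_mul_cancel_left] at h2
      have hxfF : x * f * x⁻¹ ∈ W ⊓ M := hFn.conj_mem f hfF x
      have h3 : x * f * x⁻¹ ∈ W ⊓ (U ⊓ M) := Subgroup.mem_inf.mpr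
        ⟨(Subgroup.mem_inf.mp hxfF).1,
         Subgroup.mem_inf.mpr ⟨hxfU, (Subgroup.mem_inf.mp hxfF).2⟩⟩
      rw [hEbot, Subgroup.mem_bot] at h3
      exact hf1 (conj_eq_one h3)
    · rw [hsplit x] at hx
      have hxfF : x * f * x⁻¹ ∈ W ⊓ M := hFn.conj_mem f hfF x
      have hxdW : x * d * x⁻¹ ∈ W := by
        have h2 := W.mul_mem hx (W.inv_mem (Subgroup.mem_inf.mp hxfF).1)
        rwa [mul_inv_cancel_right] at h2
      have hxdD : x * d * x⁻¹ ∈ U ⊓ M := hDnormal.conj_mem d hdD x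
      have h3 : x * d * x⁻¹ ∈ W ⊓ (U ⊓ M) := Subgroup.mem_inf.mpr ⟨hxdW, hxdD⟩
      rw [hEbot, Subgroup.mem_bot] at h3
      exact hd1 (conj_eq_one h3)

private lemma socle_normal {G : Type*} [Group G] : (socle G).Normal := by
  constructor
  intro n hn g
  have key : socle G ≤ Subgroup.comap (MulAut.conj g).toMonoidHom (socle G) := by
    apply sSup_le
    intro N hN x hx
    rw [Subgroup.mem_comap]
    exact le_sSup hN (by simpa [MulAut.conj_apply] using hN.1.conj_mem x hx g)
  have h2 := key hn
  rw [Subgroup.mem_comap] at h2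
  simpa [MulAut.conj_apply] using h2

private lemma quot_step {G : Type*} [Group G] {U W : Subgroup G}
    (hq : ∀ (N : Subgroup G) [N.Normal], N ≠ ⊥ → 2 < normalCoveringNumber (G ⧸ N))
    (hcov : ∀ g : G, ∃ x : G, x * g * x⁻¹ ∈ U ∨ x * g * x⁻¹ ∈ W)
    (N : Subgroup G) (hN : N.Normal) (hNb : N ≠ ⊥) : U ⊔ N = ⊤ ∨ W ⊔ N = ⊤ := by
  by_contra hcon
  push_neg at hcon
  obtain ⟨hUN, hWN⟩ := hcon
  haveI := hN
  have hlt := hq N hNb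
  have hle : normalCoveringNumber (G ⧸ N) ≤ 2 := by
    apply sInf_le
    refine ⟨2, by simp, ![Subgroup.map (QuotientGroup.mk' N) U,
      Subgroup.map (QuotientGroup.mk' N) W], ?_, ?_⟩
    · have key : ∀ (V : Subgroup G), V ⊔ N ≠ ⊤ →
          Subgroup.map (QuotientGroup.mk' N) V ≠ ⊤ := by
        intro V hVN h
        apply hVN
        have h2 := congrArg (Subgroup.comap (QuotientGroup.mk' N)) h
        rwa [Subgroup.comap_map_eq, QuotientGroup.ker_mk', Subgroup.comap_top] at h2
      intro i
      fin_cases i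
      · exact key U hUN
      · exact key W hWN
    · intro q
      obtain ⟨g, rfl⟩ := QuotientGroup.mk'_surjective N q
      obtain ⟨x, hx | hx⟩ := hcov g
      · refine ⟨0, (QuotientGroup.mk' N) x, ?_⟩
        show _ ∈ Subgroup.map (QuotientGroup.mk' N) U
        rw [← MonoidHom.map_inv, ← MonoidHom.map_mul, ← MonoidHom.map_mul]
        exact Subgroup.mem_map_of_mem _ hx
      · refine ⟨1, (QuotientGroup.mk' N) x, ?_⟩
        show _ ∈ Subgroup.map (QuotientGroup.mk' N) W
        rw [← MonoidHom.map_inv, ← MonoidHom.map_mul, ← MonoidHom.map_mul]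
        exact Subgroup.mem_map_of_mem _ hx
  exact lt_irrefl _ (lt_of_lt_of_le hlt hle)

/-- If `γ(G) = 2`, `γ(G/N) > 2` for every non-trivial normal subgroup `N`, and
`M = soc(G)` is abelian, then `G = M ⋊ K` for a maximal subgroup `K`, `M` is an
irreducible `K`-module (under the faithful conjugation action of `K` on `M`, i.e. `K` is a
subgroup of `Aut(M)`), and `K` is almost-transitive: there is a proper subgroup `T` of `K`
containing, up to `K`-conjugacy, every `k ∈ K` with `C_M(k) ≠ 1`. -/
theorem abelian_socle_case (G : Type*) [Group G] [Finite G]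
    (h2 : normalCoveringNumber G = 2)
    (hq : ∀ (N : Subgroup G) [N.Normal], N ≠ ⊥ → 2 < normalCoveringNumber (G ⧸ N))
    (hab : ∀ a b : G, a ∈ socle G → b ∈ socle G → a * b = b * a) :
    ∃ K : Subgroup G, IsCoatom K ∧
      -- `G = M ⋊ K`
      socle G ⊓ K = ⊥ ∧ socle G ⊔ K = ⊤ ∧
      -- the conjugation action of `K` on `M` is faithful, i.e. `K ≤ Aut(M)`
      (∀ k ∈ K, (∀ m ∈ socle G, k * m = m * k) → k = 1) ∧
      -- `M` is an irreducible `K`-module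
      (∀ N : Subgroup G, N ≤ socle G → (∀ k ∈ K, ∀ n ∈ N, k * n * k⁻¹ ∈ N) →
        N = ⊥ ∨ N = socle G) ∧
      -- `K` is almost-transitive
      (∃ T : Subgroup G, T ≤ K ∧ T ≠ K ∧
        ∀ k ∈ K, (∃ m ∈ socle G, m ≠ 1 ∧ k * m = m * k) → ∃ x ∈ K, x * k * x⁻¹ ∈ T) := by
  classical
  haveI : Finite (Subgroup G) := Finite.of_injective _ SetLike.coe_injective
  have hmem : (2 : ℕ∞) ∈ {n : ℕ∞ | ∃ k : ℕ, n = (k : ℕ∞) ∧ ∃ H : Fin k → Subgroup G,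
      (∀ i, H i ≠ ⊤) ∧ ∀ g : G, ∃ i, ∃ x : G, x * g * x⁻¹ ∈ H i} := by
    by_contra hc
    have h2' : sInf {n : ℕ∞ | ∃ k : ℕ, n = (k : ℕ∞) ∧ ∃ H : Fin k → Subgroup G,
        (∀ i, H i ≠ ⊤) ∧ ∀ g : G, ∃ i, ∃ x : G, x * g * x⁻¹ ∈ H i} = 2 := h2
    have h3 : ∀ n ∈ {n : ℕ∞ | ∃ k : ℕ, n = (k : ℕ∞) ∧ ∃ H : Fin k → Subgroup G,
        (∀ i, H i ≠ ⊤) ∧ ∀ g : G, ∃ i, ∃ x : G, x * g * x⁻¹ ∈ H i}, (3 : ℕ∞) ≤ n := by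
      intro n hn
      have h2n : (2 : ℕ∞) ≤ n := h2' ▸ sInf_le hn
      rcases h2n.lt_or_eq with h | h
      · calc (3 : ℕ∞) = 2 + 1 := by norm_num
          _ ≤ n := Order.add_one_le_of_lt h
      · rw [← h] at hn
        exact absurd hn hc
    have h4 := le_sInf h3
    rw [h2'] at h4
    have h5 : (3 : ℕ) ≤ 2 := by exact_mod_cast h4
    omega
  obtain ⟨k, hk, H, hHne, hHcov⟩ := hmem
  have hk2 : k = 2 := by exact_mod_cast hk.symm
  subst hk2
  rcases subsingleton_or_nontrivial G with hss | hnt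
  · exfalso
    apply hHne 0
    rw [eq_top_iff]
    intro x _
    have hx1 : x = 1 := Subsingleton.elim x 1
    rw [hx1]
    exact (H 0).one_mem
  rcases eq_top_or_exists_le_coatom (H 0) with h | ⟨U, hUc, hU0⟩
  · exact absurd h (hHne 0)
  rcases eq_top_or_exists_le_coatom (H 1) with h | ⟨W, hWc, hW1⟩
  · exact absurd h (hHne 1)
  have hcov2 : ∀ g : G, ∃ x : G, x * g * x⁻¹ ∈ U ∨ x * g * x⁻¹ ∈ W := by
    intro g
    obtain ⟨i, x, hx⟩ := hHcov g
    fin_cases i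
    · exact ⟨x, Or.inl (hU0 hx)⟩
    · exact ⟨x, Or.inr (hW1 hx)⟩
  have hMn : (socle G).Normal := socle_normal
  have hsoc : ∀ A : Subgroup G, IsMinimalNormal A → A ≤ socle G := fun A hA => le_sSup hA
  have hMs : ∀ X : Subgroup G, (∀ A : Subgroup G, IsMinimalNormal A → A ≤ X) →
      socle G ≤ X := fun X h => sSup_le h
  have htopbot : (⊤ : Subgroup G) ≠ ⊥ := by
    intro h
    obtain ⟨x, hx1⟩ := exists_ne (1 : G)
    exact hx1 (Subgroup.mem_bot.mp (h ▸ Subgroup.mem_top x))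
  have hMbot : socle G ≠ ⊥ := by
    obtain ⟨A, hA, _⟩ := exists_minimal_normal_le (⊤ : Subgroup G)
      (by infer_instance) htopbot
    intro h
    exact hA.2.1 (le_bot_iff.mp (h ▸ le_sSup hA))
  have hstep := quot_step hq hcov2
  rcases hstep (socle G) hMn hMbot with h | h
  · exact main_aux (socle G) U W hMn hab hsoc hMs hUc hWc hcov2 hstep h
  · exact main_aux (socle G) W U hMn hab hsoc hMs hWc hUc
      (fun g => (hcov2 g).imp (fun _ => Or.symm))
      (fun N hn hb => (hstep N hn hb).symm) h
end

section
/- Let M be a finite elementary abelian group and let K be an almost-transitive irreducible subgroup of Aut(M). Then the semidirect product G = M ⋊ K satisfies γ(G) = 2. -/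
open scoped Pointwise

open MulAction in
lemma exists_forall_conj_not_mem {G : Type*} [Group G] [Finite G] {H : Subgroup G}
    (hH : H ≠ ⊤) : ∃ g : G, ∀ x : G, x * g * x⁻¹ ∉ H := by
  classical
  by_contra hcon
  push_neg at hcon
  letI := Fintype.ofFinite G
  letI : Fintype (G ⧸ H) := Fintype.ofFinite _
  letI : ∀ a : G, Fintype (fixedBy (G ⧸ H) a) := fun a => Fintype.ofFinite _
  letI : Fintype (orbitRel.Quotient G (G ⧸ H)) := Fintype.ofFinite _
  have hΩ : Fintype.card (orbitRel.Quotient G (G ⧸ H)) = 1 := by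
    have hsub := (pretransitive_iff_subsingleton_quotient G (G ⧸ H)).mp inferInstance
    have hne : Nonempty (orbitRel.Quotient G (G ⧸ H)) :=
      ⟨Quotient.mk _ ((1 : G) : G ⧸ H)⟩
    exact le_antisymm (Fintype.card_le_one_iff_subsingleton.mpr hsub)
      (Fintype.card_pos_iff.mpr hne)
  have hburn := sum_card_fixedBy_eq_card_orbits_mul_card_group G (G ⧸ H)
  rw [hΩ, one_mul] at hburn
  -- each fixedBy is nonempty
  have h1 : ∀ g : G, 1 ≤ Fintype.card (fixedBy (G ⧸ H) g) := by
    intro g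
    obtain ⟨x, hx⟩ := hcon g
    refine Fintype.card_pos_iff.mpr ⟨⟨((x⁻¹ : G) : G ⧸ H), ?_⟩⟩
    show g • ((x⁻¹ : G) : G ⧸ H) = ((x⁻¹ : G) : G ⧸ H)
    have : ((g * x⁻¹ : G) : G ⧸ H) = ((x⁻¹ : G) : G ⧸ H) := by
      rw [QuotientGroup.eq]
      have : (x * g * x⁻¹)⁻¹ ∈ H := H.inv_mem hx
      simpa [mul_assoc] using this
    simpa [QuotientGroup.mk_mul_of_mem] using this
  have hnt : Nontrivial (G ⧸ H) := by
    obtain ⟨g, hg⟩ : ∃ g : G, g ∉ H := by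
      by_contra h; push_neg at h; exact hH (Subgroup.eq_top_iff' H |>.mpr h)
    exact ⟨⟨(g : G ⧸ H), ((1 : G) : G ⧸ H), by
      simpa [QuotientGroup.eq] using fun h => hg (by simpa using H.inv_mem h)⟩⟩
  have h2 : 2 ≤ Fintype.card (fixedBy (G ⧸ H) (1 : G)) := by
    have : fixedBy (G ⧸ H) (1 : G) = Set.univ := by
      ext q; simp [MulAction.mem_fixedBy]
    have hcard : Fintype.card (fixedBy (G ⧸ H) (1 : G)) = Fintype.card (G ⧸ H) :=
      Fintype.card_congr ((Equiv.setCongr this).trans (Equiv.Set.univ _))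
    rw [hcard]
    exact Fintype.one_lt_card
  have hsum : Fintype.card (fixedBy (G ⧸ H) (1 : G)) +
      ∑ g ∈ Finset.univ.erase (1 : G), Fintype.card (fixedBy (G ⧸ H) g) =
      Fintype.card G := by
    rw [← hburn]
    exact Finset.add_sum_erase Finset.univ (fun g => Fintype.card (fixedBy (G ⧸ H) g))
      (Finset.mem_univ (1 : G))
  have hlow := Finset.card_nsmul_le_sum (Finset.univ.erase (1 : G))
    (fun g => Fintype.card (fixedBy (G ⧸ H) g)) 1 (fun g _ => h1 g)
  rw [smul_eq_mul, mul_one] at hlow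
  have hGpos : 1 ≤ Fintype.card G := Fintype.card_pos
  have hcarde : (Finset.univ.erase (1 : G)).card = Fintype.card G - 1 := by
    rw [Finset.card_erase_of_mem (Finset.mem_univ _), Finset.card_univ]
  omega
open SemidirectProduct in
/-- If `M` is a finite elementary abelian group and `K ≤ Aut(M)` is an almost-transitive
irreducible subgroup, then `γ(M ⋊ K) = 2`. -/
theorem gamma_semidirect_almost_transitive (M : Type*) [CommGroup M] [Finite M]
    [Nontrivial M] (p : ℕ) (hp : Nat.Prime p) (helem : ∀ x : M, x ^ p = 1)
    (K : Subgroup (MulAut M))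
    (hirr : ∀ N : Subgroup M, (∀ k ∈ K, ∀ n ∈ N, k n ∈ N) → N = ⊥ ∨ N = ⊤)
    (halm : ∃ T : Subgroup (MulAut M), T ≤ K ∧ T ≠ K ∧
      ∀ k ∈ K, (∃ m : M, m ≠ 1 ∧ k m = m) → ∃ x ∈ K, x * k * x⁻¹ ∈ T) :
    normalCoveringNumber (M ⋊[K.subtype] ↥K) = 2 := by
  classical
  obtain ⟨T, hTK, hTne, hT⟩ := halm
  set G := M ⋊[K.subtype] ↥K with hG
  haveI : Finite G := Finite.of_injective (fun g => (g.left, g.right)) (by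
    intro a b h; simp only [Prod.mk.injEq] at h; exact SemidirectProduct.ext h.1 h.2)
  set H₁ : Subgroup G := (T.subgroupOf K).comap (rightHom : G →* ↥K) with hH₁
  set H₂ : Subgroup G := (inr : ↥K →* G).range with hH₂
  have hH₁top : H₁ ≠ ⊤ := by
    obtain ⟨k, hkK, hkT⟩ := SetLike.exists_of_lt (lt_of_le_of_ne hTK hTne)
    intro h
    have : (inr ⟨k, hkK⟩ : G) ∈ H₁ := h ▸ Subgroup.mem_top _
    rw [hH₁, Subgroup.mem_comap, rightHom_inr, Subgroup.mem_subgroupOf] at this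
    exact hkT this
  have hH₂top : H₂ ≠ ⊤ := by
    obtain ⟨m, hm⟩ := exists_ne (1 : M)
    intro h
    have : (inl m : G) ∈ H₂ := h ▸ Subgroup.mem_top _
    obtain ⟨k', hk'⟩ := this
    have := congrArg SemidirectProduct.left hk'
    simp only [left_inr, left_inl] at this
    exact hm this.symm
  have hcov : ∀ g : G, (∃ x : G, x * g * x⁻¹ ∈ H₁) ∨ (∃ x : G, x * g * x⁻¹ ∈ H₂) := by
    intro g
    by_cases hfix : ∃ m₀ : M, m₀ ≠ 1 ∧ (g.right : MulAut M) m₀ = m₀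
    · left
      obtain ⟨x, hxK, hxT⟩ := hT (g.right : MulAut M) g.right.2 hfix
      refine ⟨inr ⟨x, hxK⟩, ?_⟩
      rw [hH₁, Subgroup.mem_comap, Subgroup.mem_subgroupOf]
      have h1 : (rightHom (inr ⟨x, hxK⟩ * g * (inr ⟨x, hxK⟩)⁻¹) : ↥K)
          = ⟨x, hxK⟩ * g.right * (⟨x, hxK⟩ : ↥K)⁻¹ := by
        simp only [map_mul, map_inv, rightHom_inr]
        rfl
      rw [h1]
      simpa using hxT
    · right
      push_neg at hfix
      set k : MulAut M := (g.right : MulAut M) with hk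
      have hinj : Function.Injective (fun z : M => z / k z) := by
        intro a b hab
        simp only [div_eq_div_iff_mul_eq_mul] at hab
        have key : k (a / b) = a / b := by
          rw [map_div, div_eq_div_iff_mul_eq_mul]
          rw [mul_comm (k a) b]
          exact hab.symm
        by_contra hne
        exact hfix (a / b) (by simpa [div_eq_one] using hne) key
      obtain ⟨z, hz⟩ := (Finite.injective_iff_surjective.mp hinj) g.left
      refine ⟨inl z⁻¹, ?_⟩
      have hleft : (inl z⁻¹ * g * (inl z⁻¹)⁻¹).left = 1 := by
        rw [show ((inl z⁻¹ : G))⁻¹ = inl z by rw [← map_inv, inv_inv]]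
        rw [mul_left, mul_left, mul_right, left_inl, right_inl, left_inl]
        simp only [one_mul, map_one, MulAut.one_apply, mul_one]
        rw [← hz]
        show z⁻¹ * (z / k z) * (K.subtype g.right) z = 1
        rw [show (K.subtype g.right) z = k z from rfl]
        simp [div_eq_mul_inv, mul_assoc]
      exact ⟨(inl z⁻¹ * g * (inl z⁻¹)⁻¹).right,
        SemidirectProduct.ext (by rw [left_inr]; exact hleft.symm) rfl⟩
  rw [normalCoveringNumber]
  apply le_antisymm
  · apply sInf_le
    refine ⟨2, by norm_num, ![H₁, H₂], ?_, ?_⟩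
    · intro i
      fin_cases i
      · simpa using hH₁top
      · simpa using hH₂top
    · intro g
      rcases hcov g with ⟨x, hx⟩ | ⟨x, hx⟩
      · exact ⟨0, x, by simpa using hx⟩
      · exact ⟨1, x, by simpa using hx⟩
  · apply le_sInf
    rintro n ⟨m, rfl, H, hne, hcv⟩
    have hm2 : 2 ≤ m := by
      by_contra h
      push_neg at h
      interval_cases m
      · obtain ⟨i, -⟩ := hcv 1
        exact i.elim0
      · obtain ⟨g0, hg0⟩ := exists_forall_conj_not_mem (hne 0)
        obtain ⟨i, x, hx⟩ := hcv g0
        exact hg0 x (by rwa [Subsingleton.elim i 0] at hx)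
    exact_mod_cast hm2
end

section
/- Let S be a finite non-abelian simple group, let T be a proper subgroup of S, and let h be an element of S normalizing T. Then hS ≠ ∪_{s ∈ S} (hT)^s; that is, S is not equal to the union over s ∈ S of the conjugates s⁻¹(hT)s of the coset hT. -/
open scoped Pointwise

lemma aux_not_cover {G : Type*} [Group G] [Finite G] (H : Subgroup G) (hH : H ≠ ⊤) :
    ∃ g : G, ∀ s : G, s * g * s⁻¹ ∉ H := by
  by_contra hc
  push_neg at hc
  classical
  have := Fintype.ofFinite G
  -- act on G ⧸ H
  have hcard2 : 2 ≤ Fintype.card (G ⧸ H) := by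
    have : Nat.card (G ⧸ H) = H.index := rfl
    have h1 : H.index ≠ 1 := by
      simpa [Subgroup.index_eq_one] using hH
    have h0 : H.index ≠ 0 := Subgroup.index_ne_zero_of_finite
    have : 2 ≤ H.index := by omega
    rwa [← Nat.card_eq_fintype_card]
  have hfix : ∀ g : G, ∃ x : G ⧸ H, g • x = x := by
    intro g
    obtain ⟨s, hs⟩ := hc g
    refine ⟨(s⁻¹ : G), ?_⟩
    have : s * g⁻¹ * s⁻¹ ∈ H := by
      have := H.inv_mem hs
      simpa [mul_assoc] using this
    show ((g * s⁻¹ : G) : G ⧸ H) = ((s⁻¹ : G) : G ⧸ H)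
    rw [QuotientGroup.eq]
    simpa [mul_assoc] using this
  have horb : Fintype.card (MulAction.orbitRel.Quotient G (G ⧸ H)) = 1 := by
    have : Subsingleton (MulAction.orbitRel.Quotient G (G ⧸ H)) := by
      constructor
      rintro ⟨x⟩ ⟨y⟩
      apply Quotient.sound
      exact MulAction.exists_smul_eq G y x
    have : Nonempty (MulAction.orbitRel.Quotient G (G ⧸ H)) := by
      infer_instance
    have h1 := Fintype.card_le_one_iff_subsingleton.mpr ‹Subsingleton _›
    have h2 := Fintype.card_pos_iff.mpr ‹Nonempty _›
    omega
  have hburn := MulAction.sum_card_fixedBy_eq_card_orbits_mul_card_group G (G ⧸ H)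
  rw [horb, one_mul] at hburn
  have hge : ∀ g : G, 1 ≤ Fintype.card (MulAction.fixedBy (G ⧸ H) g) := by
    intro g
    obtain ⟨x, hx⟩ := hfix g
    exact Fintype.card_pos_iff.mpr ⟨⟨x, hx⟩⟩
  have hone : Fintype.card (MulAction.fixedBy (G ⧸ H) (1 : G)) = Fintype.card (G ⧸ H) := by
    apply Fintype.card_congr
    apply Equiv.subtypeUnivEquiv
    intro x; simp [MulAction.fixedBy]
  have hsum : Fintype.card G + 1 ≤ ∑ g : G, Fintype.card (MulAction.fixedBy (G ⧸ H) g) := by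
    have := Finset.sum_le_sum (f := fun _ : G => 1)
      (g := fun g => Fintype.card (MulAction.fixedBy (G ⧸ H) g))
      (s := Finset.univ.erase 1) (fun i _ => hge i)
    calc Fintype.card G + 1
        ≤ (Finset.univ.erase (1:G)).card + Fintype.card (G ⧸ H) := by
          rw [Finset.card_erase_of_mem (Finset.mem_univ _), Finset.card_univ]
          have : 0 < Fintype.card G := Fintype.card_pos
          omega
      _ ≤ (∑ g ∈ Finset.univ.erase (1:G), Fintype.card (MulAction.fixedBy (G ⧸ H) g))
            + Fintype.card (MulAction.fixedBy (G ⧸ H) (1:G)) := by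
          simp only [Finset.sum_const, smul_eq_mul, mul_one] at this
          omega
      _ = ∑ g : G, Fintype.card (MulAction.fixedBy (G ⧸ H) g) := by
          rw [Finset.sum_erase_add _ _ (Finset.mem_univ _)]
  omega

/-- If `S` is a finite non-abelian simple group, `T < S` and `h ∈ S` normalizes `T`,
then `hS ≠ ⋃_{s ∈ S} (hT)^s`, i.e. the conjugates of the coset `hT` do not cover `S`. -/
theorem coset_conjugates_do_not_cover (S : Type*) [Group S] [Finite S]
    (hS : IsSimpleGroup S) (hSnonab : ¬ ∀ a b : S, a * b = b * a)
    (T : Subgroup S) (hT : T ≠ ⊤) (h : S) (hnorm : h ∈ Subgroup.normalizer (T : Set S)) :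
    (⋃ s : S, (fun y => s⁻¹ * y * s) '' (h • (T : Set S))) ≠ Set.univ := by
  intro hcov
  by_cases hN : Subgroup.normalizer (T : Set S) = ⊤
  · -- T is normal, hence trivial
    have hTnormal : T.Normal := Subgroup.normalizer_eq_top_iff.mp hN
    have hTbot : T = ⊥ := (hS.eq_bot_or_eq_top_of_normal T hTnormal).resolve_right hT
    subst hTbot
    -- union is the conjugacy class of h
    by_cases hh : h = 1
    · subst hh
      push_neg at hSnonab
      obtain ⟨a, b, hab⟩ := hSnonab
      have ha : a ≠ 1 := by rintro rfl; simp at hab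
      have : a ∈ (⋃ s : S, (fun y => s⁻¹ * y * s) '' ((1:S) • ((⊥ : Subgroup S) : Set S))) := by
        rw [hcov]; trivial
      simp only [Set.mem_iUnion, Set.mem_image] at this
      obtain ⟨s, y, hy, hys⟩ := this
      simp only [Subgroup.coe_bot, Set.smul_set_singleton, Set.mem_singleton_iff] at hy
      subst hy
      simp at hys
      exact ha hys.symm
    · have : (1:S) ∈ (⋃ s : S, (fun y => s⁻¹ * y * s) '' (h • ((⊥ : Subgroup S) : Set S))) := by
        rw [hcov]; trivial
      simp only [Set.mem_iUnion, Set.mem_image] at this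
      obtain ⟨s, y, hy, hys⟩ := this
      simp only [Subgroup.coe_bot, Set.smul_set_singleton, Set.mem_singleton_iff, smul_eq_mul,
        mul_one] at hy
      apply hh
      have hyh : y = h := by simpa using hy
      rw [hyh] at hys
      calc h = s * (s⁻¹ * h * s) * s⁻¹ := by group
        _ = s * 1 * s⁻¹ := by rw [hys]
        _ = 1 := by group
  · -- normalizer is proper; all conjugates of hT lie in conjugates of normalizer
    obtain ⟨g, hg⟩ := aux_not_cover (Subgroup.normalizer (T : Set S)) hN
    have : g ∈ (⋃ s : S, (fun y => s⁻¹ * y * s) '' (h • (T : Set S))) := by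
      rw [hcov]; trivial
    simp only [Set.mem_iUnion, Set.mem_image] at this
    obtain ⟨s, y, hy, hys⟩ := this
    obtain ⟨t, ht', rfl⟩ := hy
    simp only [smul_eq_mul] at hys
    have hmem : h * t ∈ Subgroup.normalizer (T : Set S) := by
      exact Subgroup.mul_mem _ hnorm (Subgroup.le_normalizer ht')
    have : s * g * s⁻¹ ∈ Subgroup.normalizer (T : Set S) := by
      have : s * g * s⁻¹ = h * t := by
        rw [← hys]; group
      rwa [this]
    exact hg s this
end
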